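/- arXiv:1806.06683 — 5 statements merged into one kernel-verified Lean document; each statement's English description precedes it below -/
import Mathlib

section
/- Let Γ = {X_n}_{n∈ℕ₀} be a supermartingale adapted to a filtration {F_n}_{n∈ℕ₀} such that X_0 is a.s. constant with X_0 > 0, for all n and ω one has X_n(ω) ≥ 0 and X_n(ω) = 0 implies X_{n+1}(ω) = 0, and Γ satisfies the LBCAD condition with parameter δ ∈ (0,∞). Then there exist constants C > 0, c ∈ (0,1) and K ∈ ℕ such that for all natural numbers k ≥ K, P(Z_Γ ≥ k) ≤ C/√k + E(X_0)/(c²·k)^{1/6}. -/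
open MeasureTheory ProbabilityTheory

set_option maxHeartbeats 1000000 in
/-- **Tail bound for general LBCAD supermartingales:**
`P(Z_Γ ≥ k) ≤ C/√k + E(X₀)/(c²·k)^{1/6}` for all large `k`, where
`P(Z_Γ ≥ k) = μ {ω | ∀ n < k, 0 < X n ω}`. -/
theorem general_supermartingale_tail_bound
    {Ω : Type*} {m0 : MeasurableSpace Ω} {μ : Measure Ω} [IsProbabilityMeasure μ]
    (ℱ : Filtration ℕ m0) (X : ℕ → Ω → ℝ)
    (hsup : Supermartingale X ℱ μ)
    (x₀ : ℝ) (hx₀pos : 0 < x₀) (hX0 : ∀ᵐ ω ∂μ, X 0 ω = x₀)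
    (hnonneg : ∀ n ω, 0 ≤ X n ω)
    (habsorb : ∀ n ω, X n ω = 0 → X (n + 1) ω = 0)
    (δ : ℝ) (hδ : 0 < δ)
    (hLBCAD : ∀ n : ℕ, ∀ᵐ ω ∂μ,
      0 < X n ω → δ ≤ (μ[fun ω' => |X (n + 1) ω' - X n ω'| | ℱ n]) ω) :
    ∃ C > (0 : ℝ), ∃ c ∈ Set.Ioo (0 : ℝ) 1, ∃ K : ℕ, ∀ k : ℕ, K ≤ k →
      (μ {ω | ∀ n < k, 0 < X n ω}).toReal ≤
        C / Real.sqrt k + (∫ ω, X 0 ω ∂μ) / (c ^ 2 * k) ^ ((1 : ℝ) / 6) := by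
  set ε : ℝ := δ / 2 with hεdef
  have hε : 0 < ε := by positivity
  -- helper: bounded measurable functions are integrable
  have hbint : ∀ (f : Ω → ℝ) (Cb : ℝ), AEStronglyMeasurable f μ → (∀ ω, |f ω| ≤ Cb) →
      Integrable f μ := fun f Cb hmeas hb =>
    (integrable_const Cb).mono' hmeas (Filter.Eventually.of_forall fun ω => by
      simpa [Real.norm_eq_abs] using hb ω)
  have hXm : ∀ n, Measurable (X n) := fun n =>
    ((hsup.stronglyAdapted n).mono (ℱ.le n)).measurable
  have hXint := hsup.integrable
  -- the master bound
  have master : ∀ a : ℝ, 1 ≤ a → ∀ k : ℕ, 1 ≤ k →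
      (μ {ω | ∀ n < k, 0 < X n ω}).toReal ≤ x₀ / a + a ^ 2 / (ε ^ 2 * k) := by
    intro a ha1 k hk
    have ha : (0 : ℝ) < a := lt_of_lt_of_le one_pos ha1
    set Z : ℕ → Ω → ℝ := fun n ω => min (X n ω) a with hZdef
    have hZmF : ∀ n, StronglyMeasurable[ℱ n] (Z n) := fun n =>
      ((hsup.stronglyAdapted n).measurable.min measurable_const).stronglyMeasurable
    have hZM : ∀ n, Measurable (Z n) := fun n => ((hXm n).min measurable_const)
    have hZ0 : ∀ n ω, 0 ≤ Z n ω := fun n ω => le_min (hnonneg n ω) ha.le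
    have hZa : ∀ n ω, Z n ω ≤ a := fun n ω => min_le_right _ _
    have hZint : ∀ n, Integrable (Z n) μ := fun n =>
      hbint _ a (hZM n).aestronglyMeasurable
        (fun ω => abs_le.2 ⟨by linarith [hZ0 n ω], hZa n ω⟩)
    set B : ℕ → Set Ω := fun n => {ω | 0 < X n ω ∧ X n ω < a} with hBdef
    have hBmeasF : ∀ n, MeasurableSet[ℱ n] (B n) := fun n =>
      ((measurableSet_lt measurable_const (hsup.stronglyAdapted n).measurable).inter
        (measurableSet_lt (hsup.stronglyAdapted n).measurable measurable_const))
    have hBmeas : ∀ n, MeasurableSet (B n) := fun n => (ℱ.le n) _ (hBmeasF n)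
    -- integrability of the square pieces
    have hprev_int : ∀ n, Integrable (fun ω => (a - Z n ω) ^ 2) μ := fun n =>
      hbint _ (a ^ 2) ((measurable_const.sub (hZM n)).pow_const 2).aestronglyMeasurable
        (fun ω => by
          rw [abs_of_nonneg (sq_nonneg _)]
          nlinarith [hZ0 n ω, hZa n ω])
    -- key one-step estimate
    have key : ∀ n : ℕ,
        (∫ ω, (a - Z n ω) ^ 2 ∂μ) + ε ^ 2 * (μ (B n)).toReal ≤
          ∫ ω, (a - Z (n + 1) ω) ^ 2 ∂μ := by
      intro n
      have hsq_int : Integrable (fun ω => (Z (n + 1) ω - Z n ω) ^ 2) μ :=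
        hbint _ (a ^ 2)
          (((hZM (n + 1)).sub (hZM n)).pow_const 2).aestronglyMeasurable
          (fun ω => by
            rw [abs_of_nonneg (sq_nonneg _)]
            nlinarith [hZ0 n ω, hZa n ω, hZ0 (n + 1) ω, hZa (n + 1) ω])
      have hAabs_int : Integrable (fun ω => |Z (n + 1) ω - Z n ω|) μ :=
        ((hZint (n + 1)).sub (hZint n)).abs
      -- conditional supermartingale property for Z
      have hcondZ : μ[Z (n + 1)|ℱ n] ≤ᵐ[μ] Z n := by
        have h1 : μ[Z (n + 1)|ℱ n] ≤ᵐ[μ] μ[X (n + 1)|ℱ n] :=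
          condExp_mono (hZint _) (hXint _)
            (Filter.Eventually.of_forall fun ω => min_le_left _ _)
        have h2 := hsup.2.1 n (n + 1) (Nat.le_succ n)
        have h3 : μ[Z (n + 1)|ℱ n] ≤ᵐ[μ] fun _ => a := by
          have h4 : μ[Z (n + 1)|ℱ n] ≤ᵐ[μ] μ[fun _ => a|ℱ n] :=
            condExp_mono (hZint _) (integrable_const a)
              (Filter.Eventually.of_forall fun ω => min_le_right _ _)
          rwa [condExp_const (ℱ.le n)] at h4
        filter_upwards [h1.trans h2, h3] with ω hx hc
        exact le_min hx hc
      have hgcond : (0 : Ω → ℝ) ≤ᵐ[μ] μ[fun ω => Z n ω - Z (n + 1) ω|ℱ n] := by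
        have hsub : μ[fun ω => Z n ω - Z (n + 1) ω|ℱ n] =ᵐ[μ]
            μ[Z n|ℱ n] - μ[Z (n + 1)|ℱ n] := condExp_sub (hZint n) (hZint (n + 1)) _
        have hself : μ[Z n|ℱ n] = Z n :=
          condExp_of_stronglyMeasurable (ℱ.le n) (hZmF n) (hZint n)
        filter_upwards [hsub, hcondZ] with ω h1 h2
        have h1' : (μ[fun ω => Z n ω - Z (n + 1) ω|ℱ n]) ω
            = (μ[Z n|ℱ n]) ω - (μ[Z (n + 1)|ℱ n]) ω := h1
        rw [Pi.zero_apply, h1', hself]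
        linarith
      -- cross term is nonnegative
      have hFG_int : Integrable
          ((fun ω => 2 * (a - Z n ω)) * (fun ω => Z n ω - Z (n + 1) ω)) μ := by
        refine hbint _ (2 * a * a)
          ((((measurable_const.sub (hZM n)).const_mul 2).mul
            ((hZM n).sub (hZM (n + 1))))).aestronglyMeasurable (fun ω => ?_)
        have h0 := hZ0 n ω; have h1 := hZa n ω
        have h2 := hZ0 (n + 1) ω; have h3 := hZa (n + 1) ω
        rw [Pi.mul_apply, abs_mul]
        have e1 : |2 * (a - Z n ω)| ≤ 2 * a := by rw [abs_of_nonneg (by linarith)]; linarith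
        have e2 : |Z n ω - Z (n + 1) ω| ≤ a := abs_le.2 ⟨by linarith, by linarith⟩
        calc |2 * (a - Z n ω)| * |Z n ω - Z (n + 1) ω| ≤ (2 * a) * a :=
              mul_le_mul e1 e2 (abs_nonneg _) (by linarith)
          _ = 2 * a * a := by ring
      have hG_int : Integrable (fun ω => Z n ω - Z (n + 1) ω) μ :=
        (hZint n).sub (hZint (n + 1))
      have cross_nonneg : 0 ≤ ∫ ω,
          ((fun ω => 2 * (a - Z n ω)) * (fun ω => Z n ω - Z (n + 1) ω)) ω ∂μ := by
        rw [← integral_condExp (ℱ.le n)]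
        have hFm : StronglyMeasurable[ℱ n] (fun ω => 2 * (a - Z n ω)) :=
          ((measurable_const.sub (hZmF n).measurable).const_mul 2).stronglyMeasurable
        have hpull := condExp_mul_of_stronglyMeasurable_left hFm hFG_int hG_int
        rw [integral_congr_ae hpull]
        refine integral_nonneg_of_ae ?_
        filter_upwards [hgcond] with ω hω
        have hω' : (0:ℝ) ≤ (μ[fun ω => Z n ω - Z (n + 1) ω|ℱ n]) ω := hω
        have hz := hZa n ω
        have hre : ((fun ω => 2 * (a - Z n ω)) * μ[fun ω => Z n ω - Z (n + 1) ω|ℱ n]) ω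
            = 2 * (a - Z n ω) * (μ[fun ω => Z n ω - Z (n + 1) ω|ℱ n]) ω := rfl
        rw [hre]
        exact mul_nonneg (by linarith) hω'
      -- square term lower bound
      -- (iii): conditional downward move of X is at least ε on {X n > 0}
      have hXsub_int : Integrable (fun ω => X (n + 1) ω - X n ω) μ :=
        (hXint (n + 1)).sub (hXint n)
      have hdabs_int : Integrable (fun ω' => |X (n + 1) ω' - X n ω'|) μ := hXsub_int.abs
      have hnegp_int : Integrable
          (fun ω => (2⁻¹ : ℝ) * (|X (n + 1) ω - X n ω| - (X (n + 1) ω - X n ω))) μ :=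
        (hdabs_int.sub hXsub_int).const_mul _
      have hXcond : μ[fun ω => X (n + 1) ω - X n ω|ℱ n] ≤ᵐ[μ] fun _ => (0:ℝ) := by
        have hsub : μ[fun ω => X (n + 1) ω - X n ω|ℱ n] =ᵐ[μ]
            μ[X (n + 1)|ℱ n] - μ[X n|ℱ n] := condExp_sub (hXint (n + 1)) (hXint n) _
        have hself : μ[X n|ℱ n] = X n :=
          condExp_of_stronglyMeasurable (ℱ.le n) (hsup.stronglyAdapted n) (hXint n)
        filter_upwards [hsub, hsup.2.1 n (n + 1) (Nat.le_succ n)] with ω h1 h2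
        have h1' : (μ[fun ω => X (n + 1) ω - X n ω|ℱ n]) ω
            = (μ[X (n + 1)|ℱ n]) ω - (μ[X n|ℱ n]) ω := h1
        rw [h1', hself]
        simpa using sub_nonpos.2 h2
      have ae3 : ∀ᵐ ω ∂μ, 0 < X n ω → ε ≤
          (μ[fun ω => (2⁻¹ : ℝ) * (|X (n + 1) ω - X n ω| - (X (n + 1) ω - X n ω))|ℱ n]) ω := by
        have e1 : μ[fun ω => (2⁻¹ : ℝ) * (|X (n + 1) ω - X n ω| - (X (n + 1) ω - X n ω))|ℱ n]
            =ᵐ[μ] (2⁻¹ : ℝ) •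
              μ[fun ω => |X (n + 1) ω - X n ω| - (X (n + 1) ω - X n ω)|ℱ n] :=
          condExp_smul (2⁻¹ : ℝ) (fun ω => |X (n + 1) ω - X n ω| - (X (n + 1) ω - X n ω)) _
        have e2 : μ[fun ω => |X (n + 1) ω - X n ω| - (X (n + 1) ω - X n ω)|ℱ n] =ᵐ[μ]
            μ[fun ω' => |X (n + 1) ω' - X n ω'| | ℱ n] - μ[fun ω => X (n + 1) ω - X n ω|ℱ n] :=
          condExp_sub hdabs_int hXsub_int _
        filter_upwards [e1, e2, hXcond, hLBCAD n] with ω h1 h2 h3 h4 hx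
        have h4' := h4 hx
        have h3' : (μ[fun ω => X (n + 1) ω - X n ω|ℱ n]) ω ≤ 0 := h3
        rw [h1]
        have h2' : (μ[fun ω => |X (n + 1) ω - X n ω| - (X (n + 1) ω - X n ω)|ℱ n]) ω =
            (μ[fun ω' => |X (n + 1) ω' - X n ω'| | ℱ n]) ω -
              (μ[fun ω => X (n + 1) ω - X n ω|ℱ n]) ω := h2
        rw [Pi.smul_apply, smul_eq_mul, h2']
        rw [hεdef]
        linarith
      -- (ii): on B n, conditional |ΔZ| dominates conditional downward move of X
      have ind_le : ∀ ω, (B n).indicator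
            (fun ω => (2⁻¹ : ℝ) * (|X (n + 1) ω - X n ω| - (X (n + 1) ω - X n ω))) ω ≤
          (B n).indicator (fun ω => |Z (n + 1) ω - Z n ω|) ω := by
        intro ω
        by_cases hω : ω ∈ B n
        · rw [Set.indicator_of_mem hω, Set.indicator_of_mem hω]
          obtain ⟨hx0, hxa⟩ := hω
          have hzn : Z n ω = X n ω := min_eq_left hxa.le
          have hmle : Z (n + 1) ω ≤ X (n + 1) ω := min_le_left _ _
          have habs : Z n ω - Z (n + 1) ω ≤ |Z (n + 1) ω - Z n ω| := by
            rw [abs_sub_comm]; exact le_abs_self _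
          have habs0 : (0:ℝ) ≤ |Z (n + 1) ω - Z n ω| := abs_nonneg _
          rcases le_total (X (n + 1) ω - X n ω) 0 with hd | hd
          · rw [abs_of_nonpos hd]
            have : X n ω - X (n + 1) ω ≤ Z n ω - Z (n + 1) ω := by
              rw [hzn]; linarith
            linarith
          · rw [abs_of_nonneg hd]
            linarith
        · rw [Set.indicator_of_notMem hω, Set.indicator_of_notMem hω]
      have ae2 : ∀ᵐ ω ∂μ, ω ∈ B n →
          (μ[fun ω => (2⁻¹ : ℝ) * (|X (n + 1) ω - X n ω| - (X (n + 1) ω - X n ω))|ℱ n]) ω ≤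
            (μ[fun ω => |Z (n + 1) ω - Z n ω| | ℱ n]) ω := by
        have cmono := condExp_mono (m := ℱ n) (μ := μ)
          (hnegp_int.indicator (hBmeas n)) (hAabs_int.indicator (hBmeas n))
          (Filter.Eventually.of_forall ind_le)
        have i1 := condExp_indicator (m := ℱ n) hnegp_int (hBmeasF n)
        have i2 := condExp_indicator (m := ℱ n) hAabs_int (hBmeasF n)
        filter_upwards [cmono, i1, i2] with ω hc h1 h2 hB
        have e1 : (μ[(B n).indicator
            (fun ω => (2⁻¹ : ℝ) * (|X (n + 1) ω - X n ω| - (X (n + 1) ω - X n ω)))|ℱ n]) ω =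
            (μ[fun ω => (2⁻¹ : ℝ) * (|X (n + 1) ω - X n ω| - (X (n + 1) ω - X n ω))|ℱ n]) ω := by
          rw [h1, Set.indicator_of_mem hB]
        have e2 : (μ[(B n).indicator (fun ω => |Z (n + 1) ω - Z n ω|)|ℱ n]) ω =
            (μ[fun ω => |Z (n + 1) ω - Z n ω| | ℱ n]) ω := by
          rw [h2, Set.indicator_of_mem hB]
        rw [← e1, ← e2]
        exact hc
      -- (i): conditional second moment dominates 2ε E|ΔZ| - ε²
      have ae1 : ∀ᵐ ω ∂μ,
          2 * ε * (μ[fun ω => |Z (n + 1) ω - Z n ω| | ℱ n]) ω - ε ^ 2 ≤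
            (μ[fun ω => (Z (n + 1) ω - Z n ω) ^ 2|ℱ n]) ω := by
        have hlin_int : Integrable (fun ω => 2 * ε * |Z (n + 1) ω - Z n ω| - ε ^ 2) μ :=
          ((hAabs_int.const_mul (2 * ε)).sub (integrable_const (ε ^ 2)))
        have hmono := condExp_mono (m := ℱ n) hlin_int hsq_int
          (Filter.Eventually.of_forall fun ω => by
            show 2 * ε * |Z (n + 1) ω - Z n ω| - ε ^ 2 ≤ (Z (n + 1) ω - Z n ω) ^ 2
            nlinarith [sq_nonneg (|Z (n + 1) ω - Z n ω| - ε), sq_abs (Z (n + 1) ω - Z n ω)])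
        have d1 : μ[fun ω => 2 * ε * |Z (n + 1) ω - Z n ω| - ε ^ 2|ℱ n] =ᵐ[μ]
            μ[fun ω => 2 * ε * |Z (n + 1) ω - Z n ω| | ℱ n] - μ[fun _ => (ε ^ 2 : ℝ)|ℱ n] :=
          condExp_sub (hAabs_int.const_mul (2 * ε)) (integrable_const _) _
        have d2 : μ[fun ω => 2 * ε * |Z (n + 1) ω - Z n ω| | ℱ n] =ᵐ[μ]
            (2 * ε) • μ[fun ω => |Z (n + 1) ω - Z n ω| | ℱ n] :=
          condExp_smul (2 * ε) (fun ω => |Z (n + 1) ω - Z n ω|) _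
        have d3 : μ[fun _ => (ε ^ 2 : ℝ)|ℱ n] = fun _ => (ε ^ 2 : ℝ) := condExp_const (ℱ.le n) _
        filter_upwards [hmono, d1, d2] with ω h1 h2 h3
        have h2' : (μ[fun ω => 2 * ε * |Z (n + 1) ω - Z n ω| - ε ^ 2|ℱ n]) ω =
            (μ[fun ω => 2 * ε * |Z (n + 1) ω - Z n ω| | ℱ n]) ω -
              (μ[fun _ => (ε ^ 2 : ℝ)|ℱ n]) ω := h2
        have h3' : (μ[fun ω => 2 * ε * |Z (n + 1) ω - Z n ω| | ℱ n]) ω =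
            2 * ε * (μ[fun ω => |Z (n + 1) ω - Z n ω| | ℱ n]) ω := h3
        rw [h2', h3', d3] at h1
        exact h1
      -- combine: conditional second moment is at least ε² on B n
      have aeB : ∀ᵐ ω ∂μ, ω ∈ B n →
          ε ^ 2 ≤ (μ[fun ω => (Z (n + 1) ω - Z n ω) ^ 2|ℱ n]) ω := by
        filter_upwards [ae1, ae2, ae3] with ω h1 h2 h3 hB
        have h3' := h3 hB.1
        have h2' := h2 hB
        nlinarith
      -- integrate
      have sq_bound : ε ^ 2 * (μ (B n)).toReal ≤ ∫ ω, (Z (n + 1) ω - Z n ω) ^ 2 ∂μ := by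
        have hSind_int : Integrable ((B n).indicator fun ω => (Z (n + 1) ω - Z n ω) ^ 2) μ :=
          hsq_int.indicator (hBmeas n)
        have step1 : ∫ ω, (B n).indicator (fun ω => (Z (n + 1) ω - Z n ω) ^ 2) ω ∂μ ≤
            ∫ ω, (Z (n + 1) ω - Z n ω) ^ 2 ∂μ :=
          integral_mono hSind_int hsq_int
            (Set.indicator_le_self' fun ω _ => sq_nonneg _)
        have step2 : ∫ ω, (B n).indicator (fun ω => (Z (n + 1) ω - Z n ω) ^ 2) ω ∂μ =
            ∫ ω, (μ[(B n).indicator fun ω => (Z (n + 1) ω - Z n ω) ^ 2|ℱ n]) ω ∂μ :=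
          (integral_condExp (ℱ.le n)).symm
        have i3 := condExp_indicator (m := ℱ n) hsq_int (hBmeasF n)
        have hle : (fun ω => (B n).indicator (fun _ => ε ^ 2) ω) ≤ᵐ[μ]
            μ[(B n).indicator fun ω => (Z (n + 1) ω - Z n ω) ^ 2|ℱ n] := by
          filter_upwards [i3, aeB] with ω h1 h2
          rw [h1]
          by_cases hB : ω ∈ B n
          · rw [Set.indicator_of_mem hB, Set.indicator_of_mem hB]
            exact h2 hB
          · rw [Set.indicator_of_notMem hB, Set.indicator_of_notMem hB]
        have hint_ind : Integrable ((B n).indicator fun _ => (ε ^ 2 : ℝ)) μ :=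
          (integrable_const _).indicator (hBmeas n)
        have hfin := integral_mono_ae hint_ind integrable_condExp hle
        rw [integral_indicator_const _ (hBmeas n), smul_eq_mul] at hfin
        calc ε ^ 2 * (μ (B n)).toReal = (μ (B n)).toReal * ε ^ 2 := by ring
          _ ≤ ∫ ω, (μ[(B n).indicator fun ω => (Z (n + 1) ω - Z n ω) ^ 2|ℱ n]) ω ∂μ := hfin
          _ = ∫ ω, (B n).indicator (fun ω => (Z (n + 1) ω - Z n ω) ^ 2) ω ∂μ := step2.symm
          _ ≤ ∫ ω, (Z (n + 1) ω - Z n ω) ^ 2 ∂μ := step1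
      -- assemble
      have expand : ∀ ω, (a - Z (n + 1) ω) ^ 2 = (a - Z n ω) ^ 2 +
          (((fun ω => 2 * (a - Z n ω)) * fun ω => Z n ω - Z (n + 1) ω) ω +
            (Z (n + 1) ω - Z n ω) ^ 2) := fun ω => by
        simp only [Pi.mul_apply]; ring
      have e_int : ∫ ω, (a - Z (n + 1) ω) ^ 2 ∂μ = ∫ ω, ((a - Z n ω) ^ 2 +
          (((fun ω => 2 * (a - Z n ω)) * fun ω => Z n ω - Z (n + 1) ω) ω +
            (Z (n + 1) ω - Z n ω) ^ 2)) ∂μ :=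
        integral_congr_ae (Filter.Eventually.of_forall fun ω => expand ω)
      have e_add : ∫ ω, ((a - Z n ω) ^ 2 +
          (((fun ω => 2 * (a - Z n ω)) * fun ω => Z n ω - Z (n + 1) ω) ω +
            (Z (n + 1) ω - Z n ω) ^ 2)) ∂μ = (∫ ω, (a - Z n ω) ^ 2 ∂μ) +
          ∫ ω, (((fun ω => 2 * (a - Z n ω)) * fun ω => Z n ω - Z (n + 1) ω) ω +
            (Z (n + 1) ω - Z n ω) ^ 2) ∂μ :=
        integral_add (hprev_int n) (hFG_int.add hsq_int)
      have e_add2 : ∫ ω, (((fun ω => 2 * (a - Z n ω)) * fun ω => Z n ω - Z (n + 1) ω) ω +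
            (Z (n + 1) ω - Z n ω) ^ 2) ∂μ =
          (∫ ω, ((fun ω => 2 * (a - Z n ω)) * fun ω => Z n ω - Z (n + 1) ω) ω ∂μ) +
            ∫ ω, (Z (n + 1) ω - Z n ω) ^ 2 ∂μ :=
        integral_add hFG_int hsq_int
      linarith [sq_bound, cross_nonneg, e_int, e_add, e_add2]
    -- telescoping
    have tele : ε ^ 2 * ∑ n ∈ Finset.range k, (μ (B n)).toReal ≤ a ^ 2 := by
      have h1 : ∀ m : ℕ, ε ^ 2 * ∑ n ∈ Finset.range m, (μ (B n)).toReal ≤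
          (∫ ω, (a - Z m ω) ^ 2 ∂μ) - ∫ ω, (a - Z 0 ω) ^ 2 ∂μ := by
        intro m
        induction m with
        | zero => simp
        | succ m ih =>
          rw [Finset.sum_range_succ, mul_add]
          have := key m
          linarith
      have h2 : ∫ ω, (a - Z k ω) ^ 2 ∂μ ≤ a ^ 2 := by
        calc ∫ ω, (a - Z k ω) ^ 2 ∂μ ≤ ∫ _, (a ^ 2 : ℝ) ∂μ :=
              integral_mono (hprev_int k) (integrable_const _)
                (fun ω => by nlinarith [hZ0 k ω, hZa k ω])
          _ = a ^ 2 := by simp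
      have h3 : 0 ≤ ∫ ω, (a - Z 0 ω) ^ 2 ∂μ := integral_nonneg fun ω => sq_nonneg _
      linarith [h1 k]
    -- maximal inequality via optional stopping
    set Dset : Set Ω := {ω | ∃ n ≤ k, a ≤ X n ω} with hDdef
    have hDmeas : MeasurableSet Dset := by
      have hD2 : Dset = ⋃ n ∈ Finset.range (k + 1), {ω | a ≤ X n ω} := by
        ext ω; simp [hDdef, Nat.lt_succ_iff]
      rw [hD2]
      exact (Finset.range (k + 1)).measurableSet_biUnion fun n _ =>
        measurableSet_le measurable_const (hXm n)
    have hD : a * (μ Dset).toReal ≤ x₀ := by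
      set τ : Ω → WithTop ℕ := fun ω => ((hittingBtwn X (Set.Ici a) 0 k ω : ℕ) : WithTop ℕ) with hτdef
      have hτst : IsStoppingTime ℱ τ :=
        Adapted.isStoppingTime_hittingBtwn hsup.stronglyAdapted.adapted measurableSet_Ici
      have hτle : ∀ ω, τ ω ≤ k := fun ω => WithTop.coe_le_coe.2 (hittingBtwn_le ω)
      have hsv_int : Integrable (stoppedValue X τ) μ :=
        integrable_stoppedValue ℕ hτst hXint hτle
      have hval : ∫ ω, stoppedValue X τ ω ∂μ ≤ ∫ ω, X 0 ω ∂μ := by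
        have hneg := hsup.neg.expected_stoppedValue_mono
          (isStoppingTime_const ℱ 0) hτst (fun ω => WithTop.coe_le_coe.2 (Nat.zero_le _)) hτle
        have e1 : stoppedValue (-X) (fun _ => ((0 : ℕ) : WithTop ℕ)) = fun ω => -(X 0 ω) := rfl
        have e2 : stoppedValue (-X) τ = fun ω => -(stoppedValue X τ ω) := rfl
        change ∫ ω, -(X 0 ω) ∂μ ≤ ∫ ω, -(stoppedValue X τ ω) ∂μ at hneg
        rw [integral_neg, integral_neg] at hneg
        have : ∫ ω, stoppedValue X τ ω ∂μ ≤ ∫ ω, X 0 ω ∂μ := by linarith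
        exact this
      have hX0int : ∫ ω, X 0 ω ∂μ = x₀ := by
        rw [integral_congr_ae hX0]; simp
      have hset : ∀ ω ∈ Dset, a ≤ stoppedValue X τ ω := by
        intro ω hω
        obtain ⟨n, hn, h⟩ := hω
        exact stoppedValue_hittingBtwn_mem ⟨n, ⟨Nat.zero_le _, hn⟩, h⟩
      have hsv0 : 0 ≤ᵐ[μ] stoppedValue X τ :=
        Filter.Eventually.of_forall fun ω => hnonneg _ ω
      have c1 : a * (μ Dset).toReal = ∫ _ in Dset, a ∂μ := by
        rw [setIntegral_const, smul_eq_mul, mul_comm, measureReal_def]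
      have c2 : ∫ _ in Dset, a ∂μ ≤ ∫ ω in Dset, stoppedValue X τ ω ∂μ :=
        setIntegral_mono_on (integrableOn_const)
          hsv_int.integrableOn hDmeas hset
      have c3 : ∫ ω in Dset, stoppedValue X τ ω ∂μ ≤ ∫ ω, stoppedValue X τ ω ∂μ :=
        setIntegral_le_integral hsv_int hsv0
      calc a * (μ Dset).toReal = ∫ _ in Dset, a ∂μ := c1
        _ ≤ ∫ ω in Dset, stoppedValue X τ ω ∂μ := c2
        _ ≤ ∫ ω, stoppedValue X τ ω ∂μ := c3
        _ ≤ ∫ ω, X 0 ω ∂μ := hval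
        _ = x₀ := hX0int
    -- put the pieces together
    set Ak : Set Ω := {ω | ∀ n < k, 0 < X n ω} with hAdef
    have hAmeas : MeasurableSet Ak := by
      have : Ak = ⋂ n ∈ Finset.range k, {ω | 0 < X n ω} := by
        ext ω; simp [hAdef]
      rw [this]
      exact (Finset.range k).measurableSet_biInter fun n _ =>
        measurableSet_lt measurable_const (hXm n)
    have hsub : ∀ n, n < k → Ak ∩ Dsetᶜ ⊆ B n := by
      intro n hn ω hω
      obtain ⟨hA, hDc⟩ := hω
      refine ⟨hA n hn, ?_⟩
      by_contra h
      exact hDc ⟨n, le_of_lt hn, not_lt.1 h⟩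
    have hkpos : (0 : ℝ) < k := by
      have : (1 : ℝ) ≤ (k : ℝ) := by exact_mod_cast hk
      linarith
    have h1 : (μ (Ak ∩ Dsetᶜ)).toReal ≤ a ^ 2 / (ε ^ 2 * k) := by
      have each : ∀ n ∈ Finset.range k, (μ (Ak ∩ Dsetᶜ)).toReal ≤ (μ (B n)).toReal :=
        fun n hn => ENNReal.toReal_mono (measure_ne_top μ _)
          (measure_mono (hsub n (Finset.mem_range.1 hn)))
      have hsum : (k : ℝ) * (μ (Ak ∩ Dsetᶜ)).toReal ≤
          ∑ n ∈ Finset.range k, (μ (B n)).toReal := by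
        have := Finset.sum_le_sum each
        rwa [Finset.sum_const, Finset.card_range, nsmul_eq_mul] at this
      rw [le_div_iff₀ (by positivity)]
      nlinarith [tele]
    have h2 : (μ Dset).toReal ≤ x₀ / a := by
      rw [le_div_iff₀ ha]
      linarith
    have h3 : (μ Ak).toReal ≤ (μ (Ak ∩ Dsetᶜ)).toReal + (μ Dset).toReal := by
      have hle : μ Ak ≤ μ (Ak ∩ Dsetᶜ) + μ Dset := by
        calc μ Ak ≤ μ ((Ak ∩ Dsetᶜ) ∪ Dset) := measure_mono (fun ω hω => by
              by_cases hD : ω ∈ Dset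
              · exact Or.inr hD
              · exact Or.inl ⟨hω, hD⟩)
          _ ≤ μ (Ak ∩ Dsetᶜ) + μ Dset := measure_union_le _ _
      have := ENNReal.toReal_mono
        (by simp [measure_ne_top]) hle
      rwa [ENNReal.toReal_add (measure_ne_top μ _) (measure_ne_top μ _)] at this
    linarith
  -- instantiate
  refine ⟨1 / ε ^ 2, by positivity, 1 / 2, ⟨by norm_num, by norm_num⟩, 1, fun k hk => ?_⟩
  have hk1 : (1 : ℝ) ≤ (k : ℝ) := by exact_mod_cast hk
  have hkpos : (0 : ℝ) < (k : ℝ) := by linarith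
  set a : ℝ := (k : ℝ) ^ ((1 : ℝ) / 6) with hadef
  have ha1 : 1 ≤ a := Real.one_le_rpow hk1 (by norm_num)
  have ha : (0 : ℝ) < a := lt_of_lt_of_le one_pos ha1
  have hmb := master a ha1 k hk
  have hInt : ∫ ω, X 0 ω ∂μ = x₀ := by rw [integral_congr_ae hX0]; simp
  rw [hInt]
  have ha2 : a ^ 2 = (k : ℝ) ^ ((1 : ℝ) / 3) := by
    rw [hadef, ← Real.rpow_natCast ((k : ℝ) ^ ((1 : ℝ) / 6)) 2, ← Real.rpow_mul hkpos.le]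
    norm_num
  have t1 : a ^ 2 / (ε ^ 2 * k) ≤ (1 / ε ^ 2) / Real.sqrt k := by
    have hsq : Real.sqrt (k : ℝ) = (k : ℝ) ^ ((1 : ℝ) / 2) := Real.sqrt_eq_rpow _
    rw [div_le_div_iff₀ (by positivity) (by positivity)]
    have e1 : a ^ 2 * Real.sqrt (k : ℝ) = (k : ℝ) ^ ((5 : ℝ) / 6) := by
      rw [ha2, hsq, ← Real.rpow_add hkpos]; norm_num
    have e2 : 1 / ε ^ 2 * (ε ^ 2 * (k : ℝ)) = (k : ℝ) := by field_simp
    rw [e1, e2]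
    calc (k : ℝ) ^ ((5 : ℝ) / 6) ≤ (k : ℝ) ^ (1 : ℝ) :=
          Real.rpow_le_rpow_of_exponent_le hk1 (by norm_num)
      _ = (k : ℝ) := Real.rpow_one _
  have t2 : x₀ / a ≤ x₀ / ((1 / 2 : ℝ) ^ 2 * k) ^ ((1 : ℝ) / 6) := by
    have hble : ((1 / 2 : ℝ) ^ 2 * k) ^ ((1 : ℝ) / 6) ≤ a := by
      rw [hadef]
      exact Real.rpow_le_rpow (by positivity) (by nlinarith) (by norm_num)
    have hbpos : (0 : ℝ) < ((1 / 2 : ℝ) ^ 2 * k) ^ ((1 : ℝ) / 6) := by positivity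
    exact div_le_div_of_nonneg_left hx₀pos.le hbpos hble
  linarith
end

section
/- Let {X_n}_{n∈ℕ₀} be a martingale (respectively, supermartingale) adapted to a filtration {F_n}_{n∈ℕ₀}, and let R be a stopping time with respect to {F_n} such that E(R) < ∞. Suppose there exists c ∈ (0,∞) such that for all n ∈ ℕ₀, E[|X_{n+1} − X_n| | F_n] ≤ c almost surely. Then X_R is integrable (E(|X_R|) < ∞) and E(X_R) = E(X_0) (respectively, E(X_R) ≤ E(X_0)). -/
open MeasureTheory ProbabilityTheory Filter
open scoped ENNReal

namespace OSTAux

variable {Ω : Type*} {m0 : MeasurableSpace Ω} {μ : Measure Ω}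

lemma measurable_comp_nat {X : ℕ → Ω → ℝ} (hX : ∀ n, Measurable (X n))
    {N : Ω → ℕ} (hN : Measurable N) : Measurable fun ω => X (N ω) ω := by
  intro s hs
  have h : (fun ω => X (N ω) ω) ⁻¹' s = ⋃ n, {ω | N ω = n} ∩ X n ⁻¹' s := by
    ext ω
    simp only [Set.mem_preimage, Set.mem_iUnion, Set.mem_inter_iff, Set.mem_setOf_eq]
    constructor
    · intro h; exact ⟨N ω, rfl, h⟩
    · rintro ⟨n, hn, h⟩; rw [hn]; exact h
  rw [h]
  exact MeasurableSet.iUnion fun n => (hN (measurableSet_singleton n)).inter (hX n hs)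

lemma measurable_R {R : Ω → ℕ∞}
    (hstop : ∀ n : ℕ, MeasurableSet {ω | R ω ≤ (n : ℕ∞)}) : Measurable R := by
  apply measurable_to_countable'
  intro y
  have hpre : R ⁻¹' {y} = {x | R x = y} := rfl
  rw [hpre]
  induction y using ENat.recTopCoe with
  | top =>
    have h : {x | R x = ⊤} = ⋂ n : ℕ, {ω | R ω ≤ (n : ℕ∞)}ᶜ := by
      ext ω
      simp only [Set.mem_setOf_eq, Set.mem_iInter, Set.mem_compl_iff]
      constructor
      · intro h n hn; rw [h] at hn; exact (ENat.coe_lt_top n).not_ge hn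
      · intro h
        by_contra hne
        obtain ⟨n, hn⟩ := WithTop.ne_top_iff_exists.mp hne
        exact h n (le_of_eq hn.symm)
    rw [h]
    exact MeasurableSet.iInter fun n => (hstop n).compl
  | coe k =>
    cases k with
    | zero =>
      have h : {x | R x = (0 : ℕ)} = {ω | R ω ≤ ((0 : ℕ) : ℕ∞)} := by
        ext ω; simp [le_zero_iff]
      rw [h]; exact hstop 0
    | succ k =>
      have h : {x | R x = ((k + 1 : ℕ) : ℕ∞)} =
          {ω | R ω ≤ ((k + 1 : ℕ) : ℕ∞)} ∩ {ω | R ω ≤ (k : ℕ∞)}ᶜ := by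
        ext ω
        simp only [Set.mem_setOf_eq, Set.mem_inter_iff, Set.mem_compl_iff, not_le]
        constructor
        · intro h; rw [h]
          exact ⟨le_rfl, by exact_mod_cast Nat.lt_succ_self k⟩
        · rintro ⟨h1, h2⟩
          refine le_antisymm h1 ?_
          have : (k : ℕ∞) + 1 ≤ R ω := (ENat.add_one_le_iff (ENat.coe_ne_top k)).mpr h2
          exact_mod_cast this
      rw [h]
      exact (hstop (k + 1)).inter (hstop k).compl


lemma key [IsProbabilityMeasure μ]
    (ℱ : Filtration ℕ m0) (X : ℕ → Ω → ℝ) (R : Ω → ℕ∞)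
    (hstop : ∀ n : ℕ, MeasurableSet[ℱ n] {ω | R ω ≤ (n : ℕ∞)})
    (hRfin : ∫⁻ ω, (R ω : ℝ≥0∞) ∂μ < ⊤)
    (c : ℝ) (hc : 0 < c)
    (hdiff : ∀ n : ℕ, ∀ᵐ ω ∂μ, (μ[fun ω' => |X (n + 1) ω' - X n ω'| | ℱ n]) ω ≤ c)
    (hadp : Adapted ℱ X) (hint : ∀ n, Integrable (X n) μ) :
    Integrable (fun ω => X (R ω).toNat ω) μ ∧
      Tendsto (fun n : ℕ => ∫ ω, X (min (R ω) (n : ℕ∞)).toNat ω ∂μ)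
        atTop (nhds (∫ ω, X (R ω).toNat ω ∂μ)) := by
  classical
  set A : ℕ → Set Ω := fun k => {ω | (k : ℕ∞) < R ω} with hA
  have hXmeas : ∀ n, Measurable (X n) := fun n => (hadp n).mono (ℱ.le n) le_rfl
  have hAf : ∀ k, MeasurableSet[ℱ k] (A k) := by
    intro k
    have h : A k = {ω | R ω ≤ (k : ℕ∞)}ᶜ := by ext ω; simp [hA, not_le]
    rw [h]; exact (hstop k).compl
  have hAmeas : ∀ k, MeasurableSet (A k) := fun k => ℱ.le k _ (hAf k)
  have hDint : ∀ k, Integrable (fun ω => |X (k + 1) ω - X k ω|) μ :=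
    fun k => ((hint (k + 1)).sub (hint k)).abs
  set g : Ω → ℝ≥0∞ := fun ω => ENNReal.ofReal |X 0 ω| +
    ∑' k : ℕ, (A k).indicator (fun ω' => ENNReal.ofReal |X (k + 1) ω' - X k ω'|) ω with hg
  have hQmeas : ∀ k, Measurable ((A k).indicator
      (fun ω' => ENNReal.ofReal |X (k + 1) ω' - X k ω'|)) := fun k =>
    (((hXmeas (k + 1)).sub (hXmeas k)).abs.ennreal_ofReal).indicator (hAmeas k)
  have hgmeas : Measurable g :=
    ((hXmeas 0).abs.ennreal_ofReal).add (Measurable.ennreal_tsum hQmeas)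
  -- pointwise key bound
  have hkey : ∀ ω, ∀ m : ℕ, (m : ℕ∞) ≤ R ω → ENNReal.ofReal |X m ω| ≤ g ω := by
    intro ω m hm
    have hdecomp : X m ω = X 0 ω + ∑ k ∈ Finset.range m, (X (k + 1) ω - X k ω) := by
      rw [Finset.sum_range_sub (fun k => X k ω)]; ring
    have habs : |X m ω| ≤ |X 0 ω| + ∑ k ∈ Finset.range m, |X (k + 1) ω - X k ω| := by
      rw [hdecomp]
      exact (abs_add_le _ _).trans (by gcongr; exact Finset.abs_sum_le_sum_abs _ _)
    refine (ENNReal.ofReal_le_ofReal habs).trans ?_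
    rw [ENNReal.ofReal_add (abs_nonneg _) (Finset.sum_nonneg fun k _ => abs_nonneg _)]
    have hts : ENNReal.ofReal (∑ k ∈ Finset.range m, |X (k + 1) ω - X k ω|) ≤
        ∑' k : ℕ, (A k).indicator (fun ω' => ENNReal.ofReal |X (k + 1) ω' - X k ω'|) ω := by
      rw [ENNReal.ofReal_sum_of_nonneg (fun k _ => abs_nonneg _)]
      calc ∑ k ∈ Finset.range m, ENNReal.ofReal |X (k + 1) ω - X k ω|
          = ∑ k ∈ Finset.range m,
              (A k).indicator (fun ω' => ENNReal.ofReal |X (k + 1) ω' - X k ω'|) ω := by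
            refine Finset.sum_congr rfl fun k hk => ?_
            have hmem : ω ∈ A k :=
              lt_of_lt_of_le (Nat.cast_lt.mpr (Finset.mem_range.mp hk)) hm
            rw [Set.indicator_of_mem hmem]
        _ ≤ _ := ENNReal.sum_le_tsum _
    exact add_le_add_right hts _
  -- bound on each term of the series
  have hterm : ∀ k, ∫⁻ ω in A k, ENNReal.ofReal |X (k + 1) ω - X k ω| ∂μ ≤
      ENNReal.ofReal c * μ (A k) := by
    intro k
    rw [← ofReal_integral_eq_lintegral_ofReal ((hDint k).integrableOn)
      (ae_of_all _ fun ω => abs_nonneg _)]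
    have h1 : ∫ ω in A k, |X (k + 1) ω - X k ω| ∂μ =
        ∫ ω in A k, (μ[fun ω' => |X (k + 1) ω' - X k ω'| | ℱ k]) ω ∂μ :=
      (setIntegral_condExp (ℱ.le k) (hDint k) (hAf k)).symm
    have h2 : ∫ ω in A k, (μ[fun ω' => |X (k + 1) ω' - X k ω'| | ℱ k]) ω ∂μ ≤
        ∫ _ω in A k, c ∂μ :=
      integral_mono_ae integrable_condExp.integrableOn (integrable_const c).integrableOn
        (ae_restrict_of_ae (hdiff k))
    have h3 : ∫ ω in A k, |X (k + 1) ω - X k ω| ∂μ ≤ c * (μ (A k)).toReal := by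
      rw [h1]
      refine h2.trans ?_
      rw [setIntegral_const, smul_eq_mul, mul_comm, measureReal_def]
    refine (ENNReal.ofReal_le_ofReal h3).trans ?_
    rw [ENNReal.ofReal_mul hc.le]
    gcongr
    exact ENNReal.ofReal_toReal_le
  -- sum of measures of A k is at most the expectation of R
  have hAsum : ∑' k, μ (A k) ≤ ∫⁻ ω, (R ω : ℝ≥0∞) ∂μ := by
    have hpt : ∀ ω, ∑' k : ℕ, (A k).indicator (fun _ => (1 : ℝ≥0∞)) ω ≤ (R ω : ℝ≥0∞) := by
      intro ω
      rcases eq_or_ne (R ω) ⊤ with h | h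
      · rw [h]; exact le_top
      · obtain ⟨m, hm⟩ : ∃ m : ℕ, (m : ℕ∞) = R ω := ⟨(R ω).toNat, ENat.coe_toNat h⟩
        have hind : ∀ k : ℕ, (A k).indicator (fun _ => (1 : ℝ≥0∞)) ω
            = if k < m then 1 else 0 := by
          intro k
          by_cases hk : k < m
          · have hmem : ω ∈ A k := by
              show (k : ℕ∞) < R ω
              rw [← hm]; exact Nat.cast_lt.mpr hk
            rw [if_pos hk, Set.indicator_of_mem hmem]
          · have hmem : ω ∉ A k := by
              show ¬(k : ℕ∞) < R ω
              rw [← hm]; exact fun hlt => hk (Nat.cast_lt.mp hlt)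
            rw [if_neg hk, Set.indicator_of_notMem hmem]
        rw [tsum_congr hind, tsum_eq_sum
          (s := Finset.range m) (fun k hk => if_neg fun hlt => hk (Finset.mem_range.mpr hlt))]
        have : ∑ k ∈ Finset.range m, (if k < m then (1 : ℝ≥0∞) else 0) = m := by
          rw [Finset.sum_congr rfl fun k hk => if_pos (Finset.mem_range.mp hk)]
          simp
        rw [this, ← hm, ENat.toENNReal_coe]
    calc ∑' k, μ (A k)
        = ∑' k, ∫⁻ ω, (A k).indicator (fun _ => (1 : ℝ≥0∞)) ω ∂μ := by
          refine tsum_congr fun k => ?_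
          rw [lintegral_indicator (hAmeas k)]
          simp
      _ = ∫⁻ ω, ∑' k, (A k).indicator (fun _ => (1 : ℝ≥0∞)) ω ∂μ :=
          (lintegral_tsum fun k => (measurable_one.indicator (hAmeas k)).aemeasurable).symm
      _ ≤ _ := lintegral_mono hpt
  -- the dominating function has finite integral
  have hgfin : ∫⁻ ω, g ω ∂μ < ⊤ := by
    have h0 : ∫⁻ ω, ENNReal.ofReal |X 0 ω| ∂μ < ⊤ := by
      have h := (hint 0).2
      rw [hasFiniteIntegral_iff_norm] at h
      simpa [Real.norm_eq_abs] using h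
    have hsum : ∫⁻ ω, (∑' k, (A k).indicator
        (fun ω' => ENNReal.ofReal |X (k + 1) ω' - X k ω'|) ω) ∂μ ≤
        ENNReal.ofReal c * ∫⁻ ω, (R ω : ℝ≥0∞) ∂μ := by
      rw [lintegral_tsum fun k => (hQmeas k).aemeasurable]
      calc ∑' k, ∫⁻ ω, (A k).indicator
              (fun ω' => ENNReal.ofReal |X (k + 1) ω' - X k ω'|) ω ∂μ
          = ∑' k, ∫⁻ ω in A k, ENNReal.ofReal |X (k + 1) ω - X k ω| ∂μ :=
            tsum_congr fun k => lintegral_indicator (hAmeas k) _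
        _ ≤ ∑' k, ENNReal.ofReal c * μ (A k) := ENNReal.tsum_le_tsum hterm
        _ = ENNReal.ofReal c * ∑' k, μ (A k) := ENNReal.tsum_mul_left
        _ ≤ _ := mul_le_mul_right hAsum _
    calc ∫⁻ ω, g ω ∂μ
        = ∫⁻ ω, ENNReal.ofReal |X 0 ω| ∂μ + ∫⁻ ω, (∑' k, (A k).indicator
            (fun ω' => ENNReal.ofReal |X (k + 1) ω' - X k ω'|) ω) ∂μ :=
          lintegral_add_left ((hXmeas 0).abs.ennreal_ofReal) _
      _ < ⊤ := ENNReal.add_lt_top.mpr ⟨h0, lt_of_le_of_lt hsum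
          (ENNReal.mul_lt_top ENNReal.ofReal_lt_top hRfin)⟩
  -- R is a.e. finite
  have hRtop : ∀ᵐ ω ∂μ, R ω ≠ ⊤ := by
    have hS : MeasurableSet {ω | R ω = ⊤} := by
      have h : {ω | R ω = ⊤} = ⋂ n : ℕ, A n := by
        ext ω
        simp only [Set.mem_setOf_eq, Set.mem_iInter, hA]
        constructor
        · intro h n; rw [h]; exact ENat.coe_lt_top n
        · intro h
          by_contra hne
          obtain ⟨n, hn⟩ := WithTop.ne_top_iff_exists.mp hne
          exact absurd (h n) (by rw [← hn]; exact lt_irrefl _)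
      rw [h]; exact MeasurableSet.iInter fun n => hAmeas n
    have hμS : μ {ω | R ω = ⊤} = 0 := by
      by_contra hne
      have hle : ∫⁻ ω, ({ω | R ω = ⊤}).indicator (fun _ => (⊤ : ℝ≥0∞)) ω ∂μ ≤
          ∫⁻ ω, (R ω : ℝ≥0∞) ∂μ := by
        refine lintegral_mono fun ω => ?_
        by_cases h : R ω = ⊤
        · have hmem : ω ∈ {ω | R ω = ⊤} := h
          rw [Set.indicator_of_mem hmem, h]; simp
        · have hmem : ω ∉ {ω | R ω = ⊤} := h
          rw [Set.indicator_of_notMem hmem]; exact zero_le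
      rw [lintegral_indicator_const hS] at hle
      rw [ENNReal.top_mul hne] at hle
      exact absurd (lt_of_le_of_lt hle hRfin) (lt_irrefl _)
    rw [ae_iff]
    simpa using hμS
  -- measurability of the stopped values
  have hRmeas : Measurable R := measurable_R fun n => ℱ.le n _ (hstop n)
  have hfmeas : Measurable fun ω => X (R ω).toNat ω :=
    measurable_comp_nat hXmeas ((Measurable.of_discrete (f := ENat.toNat)).comp hRmeas)
  have hFmeas : ∀ n : ℕ, Measurable fun ω => X (min (R ω) (n : ℕ∞)).toNat ω := fun n =>
    measurable_comp_nat hXmeas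
      ((Measurable.of_discrete (f := fun x : ℕ∞ => (min x (n : ℕ∞)).toNat)).comp hRmeas)
  -- pointwise inequalities on stopping indices
  have hτle : ∀ (n : ℕ) (ω), ((min (R ω) (n : ℕ∞)).toNat : ℕ∞) ≤ R ω :=
    fun n ω => (ENat.coe_toNat_le_self _).trans (min_le_left _ _)
  have hRle : ∀ ω, ((R ω).toNat : ℕ∞) ≤ R ω := fun ω => ENat.coe_toNat_le_self _
  -- integrability of the stopped value
  have hfint : Integrable (fun ω => X (R ω).toNat ω) μ := by
    refine ⟨hfmeas.aestronglyMeasurable, ?_⟩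
    rw [hasFiniteIntegral_iff_norm]
    refine lt_of_le_of_lt (lintegral_mono fun ω => ?_) hgfin
    rw [Real.norm_eq_abs]
    exact hkey ω _ (hRle ω)
  have hgae : ∀ᵐ ω ∂μ, g ω < ⊤ := ae_lt_top hgmeas hgfin.ne
  refine ⟨hfint, ?_⟩
  refine tendsto_integral_of_dominated_convergence (fun ω => (g ω).toReal)
    (fun n => (hFmeas n).aestronglyMeasurable)
    (integrable_toReal_of_lintegral_ne_top hgmeas.aemeasurable hgfin.ne)
    (fun n => ?_) ?_
  · filter_upwards [hgae] with ω hω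
    rw [Real.norm_eq_abs]
    have h1 := hkey ω _ (hτle n ω)
    have h2 := ENNReal.toReal_mono hω.ne h1
    rwa [ENNReal.toReal_ofReal (abs_nonneg _)] at h2
  · filter_upwards [hRtop] with ω hω
    refine Tendsto.congr' ?_ (tendsto_const_nhds (x := X (R ω).toNat ω))
    filter_upwards [eventually_ge_atTop (R ω).toNat] with n hn
    have hmin : min (R ω) (n : ℕ∞) = R ω := by
      refine min_eq_left ?_
      rw [← ENat.coe_toNat hω]
      exact_mod_cast hn
    rw [hmin]

lemma stopping_time_min (ℱ : Filtration ℕ m0) (R : Ω → ℕ∞)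
    (hstop : ∀ n : ℕ, MeasurableSet[ℱ n] {ω | R ω ≤ (n : ℕ∞)}) (n : ℕ) :
    IsStoppingTime ℱ fun ω => (min (R ω) (n : ℕ∞)).toNat := by
  intro k
  by_cases h : n ≤ k
  · have hset : {ω | (min (R ω) (n : ℕ∞)).toNat ≤ k} = Set.univ := by
      ext ω
      simp only [Set.mem_setOf_eq, Set.mem_univ, iff_true]
      calc (min (R ω) (n : ℕ∞)).toNat ≤ ((n : ℕ∞)).toNat :=
            ENat.toNat_le_toNat (min_le_right _ _) (ENat.coe_ne_top n)
        _ = n := ENat.toNat_coe n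
        _ ≤ k := h
    show MeasurableSet[ℱ k] {ω | (((min (R ω) (n : ℕ∞)).toNat : ℕ) : WithTop ℕ) ≤ ((k : ℕ) : WithTop ℕ)}
    simp only [Nat.cast_le, WithTop.coe_le_coe]
    rw [hset]
    exact MeasurableSet.univ
  · push_neg at h
    have hset : {ω | (min (R ω) (n : ℕ∞)).toNat ≤ k} = {ω | R ω ≤ (k : ℕ∞)} := by
      ext ω
      simp only [Set.mem_setOf_eq]
      constructor
      · intro hle
        have hne : min (R ω) (n : ℕ∞) ≠ ⊤ :=
          ne_top_of_le_ne_top (ENat.coe_ne_top n) (min_le_right _ _)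
        have hmin : min (R ω) (n : ℕ∞) ≤ (k : ℕ∞) := by
          rw [← ENat.coe_toNat hne]
          exact_mod_cast hle
        rcases le_total (R ω) (n : ℕ∞) with h' | h'
        · rwa [min_eq_left h'] at hmin
        · rw [min_eq_right h'] at hmin
          exact absurd (Nat.cast_le.mp hmin) (not_le.mpr h)
      · intro hle
        exact ENat.toNat_le_of_le_coe ((min_le_left _ _).trans hle)
    show MeasurableSet[ℱ k] {ω | (((min (R ω) (n : ℕ∞)).toNat : ℕ) : WithTop ℕ) ≤ ((k : ℕ) : WithTop ℕ)}
    simp only [Nat.cast_le, WithTop.coe_le_coe]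
    rw [hset]
    exact hstop k

end OSTAux

open MeasureTheory ProbabilityTheory
open scoped ENNReal

/-- **Optional Stopping Theorem (second variant).**
For a stopping time `R : Ω → ℕ∞` with `E(R) < ∞` and a process whose conditional
absolute differences are uniformly bounded by `c`, the stopped value `X_R`
(defined as `ω ↦ X (R ω).toNat ω`, which agrees with `X_R` on the a.s. event
`{R < ∞}`) is integrable, and `E(X_R) = E(X₀)` for a martingale, respectively
`E(X_R) ≤ E(X₀)` for a supermartingale. -/
theorem optional_stopping_conditional_difference_bound
    {Ω : Type*} {m0 : MeasurableSpace Ω} {μ : Measure Ω} [IsProbabilityMeasure μ]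
    (ℱ : Filtration ℕ m0) (X : ℕ → Ω → ℝ)
    (R : Ω → ℕ∞)
    (hstop : ∀ n : ℕ, MeasurableSet[ℱ n] {ω | R ω ≤ (n : ℕ∞)})
    (hRfin : ∫⁻ ω, (R ω : ℝ≥0∞) ∂μ < ⊤)
    (c : ℝ) (hc : 0 < c)
    (hdiff : ∀ n : ℕ, ∀ᵐ ω ∂μ,
      (μ[fun ω' => |X (n + 1) ω' - X n ω'| | ℱ n]) ω ≤ c) :
    (Martingale X ℱ μ →
      Integrable (fun ω => X (R ω).toNat ω) μ ∧
        ∫ ω, X (R ω).toNat ω ∂μ = ∫ ω, X 0 ω ∂μ) ∧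
    (Supermartingale X ℱ μ →
      Integrable (fun ω => X (R ω).toNat ω) μ ∧
        ∫ ω, X (R ω).toNat ω ∂μ ≤ ∫ ω, X 0 ω ∂μ) := by
  have hτ : ∀ n : ℕ, IsStoppingTime ℱ fun ω => (min (R ω) (n : ℕ∞)).toNat :=
    OSTAux.stopping_time_min ℱ R hstop
  have hbddN : ∀ n : ℕ, ∀ ω : Ω, (min (R ω) (n : ℕ∞)).toNat ≤ n := fun n ω =>
    ENat.toNat_le_of_le_coe (min_le_right _ _)
  constructor
  · intro hm
    obtain ⟨hfint, htd⟩ := OSTAux.key ℱ X R hstop hRfin c hc hdiff hm.stronglyAdapted.adapted hm.integrable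
    have hconst : ∀ n : ℕ, ∫ ω, X (min (R ω) (n : ℕ∞)).toNat ω ∂μ = ∫ ω, X 0 ω ∂μ := by
      intro n
      have h1 := hm.submartingale.expected_stoppedValue_mono (isStoppingTime_const ℱ 0)
        (hτ n) (fun ω => WithTop.coe_le_coe.mpr (Nat.zero_le _)) (fun ω => WithTop.coe_le_coe.mpr (hbddN n ω))
      have h2 := (hm.neg).submartingale.expected_stoppedValue_mono (isStoppingTime_const ℱ 0)
        (hτ n) (fun ω => WithTop.coe_le_coe.mpr (Nat.zero_le _)) (fun ω => WithTop.coe_le_coe.mpr (hbddN n ω))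
      simp only [stoppedValue, Pi.neg_apply, WithTop.untopA, WithTop.untopD_coe] at h1 h2
      rw [integral_neg, integral_neg, neg_le_neg_iff] at h2
      exact le_antisymm h2 h1
    refine ⟨hfint, ?_⟩
    refine tendsto_nhds_unique htd ?_
    have : (fun n : ℕ => ∫ ω, X (min (R ω) (n : ℕ∞)).toNat ω ∂μ) =
        fun _ : ℕ => ∫ ω, X 0 ω ∂μ := funext hconst
    rw [this]
    exact tendsto_const_nhds
  · intro hs
    obtain ⟨hfint, htd⟩ := OSTAux.key ℱ X R hstop hRfin c hc hdiff hs.stronglyAdapted.adapted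
      (fun n => hs.integrable n)
    have hle : ∀ n : ℕ, ∫ ω, X (min (R ω) (n : ℕ∞)).toNat ω ∂μ ≤ ∫ ω, X 0 ω ∂μ := by
      intro n
      have h2 := (hs.neg).expected_stoppedValue_mono (isStoppingTime_const ℱ 0)
        (hτ n) (fun ω => WithTop.coe_le_coe.mpr (Nat.zero_le _)) (fun ω => WithTop.coe_le_coe.mpr (hbddN n ω))
      simp only [stoppedValue, Pi.neg_apply, WithTop.untopA, WithTop.untopD_coe] at h2
      rw [integral_neg, integral_neg, neg_le_neg_iff] at h2
      exact h2
    exact ⟨hfint, le_of_tendsto htd (Filter.Eventually.of_forall hle)⟩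
end

section
/- Let {R_n}_{n∈ℕ} be a sequence of independent and identically distributed integer-valued random variables with E(R_1) ≤ 0 and finite positive variance 0 < Var(R_1) < ∞. For any x ∈ ℤ define X_0 = x and X_n = x + Σ_{k=1}^n R_k. Then P(∃ n ∈ ℕ₀ such that X_n ≤ 0) = 1. -/
open MeasureTheory ProbabilityTheory Filter
open scoped ENNReal Topology

namespace IntRW

/-! ### Sum reindexing lemmas -/

lemma filter_range_le (j n : ℕ) : (Finset.range j).filter (fun k => n ≤ k) = Finset.Ico n j := by
  ext k; simp [Finset.mem_filter, Finset.mem_range, Finset.mem_Ico, and_comm]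

lemma sumL1 (g : ℕ → ℤ) (j n : ℕ) :
    ∑ i ∈ Finset.univ.filter (fun i : Fin j => n ≤ (i : ℕ)), g (i : ℕ)
      = ∑ k ∈ Finset.Ico n j, g k := by
  rw [Finset.sum_filter, Fin.sum_univ_eq_sum_range (fun k => if n ≤ k then g k else 0) j,
    ← Finset.sum_filter, filter_range_le]

lemma sumL2 (g : ℕ → ℤ) (j n : ℕ) :
    ∑ i ∈ Finset.univ.filter (fun i : Fin j => n ≤ (i : ℕ)), g (j - 1 - (i : ℕ))
      = ∑ k ∈ Finset.range (j - n), g k := by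
  rw [sumL1 (fun k => g (j - 1 - k)) j n]
  refine Finset.sum_nbij' (fun k => j - 1 - k) (fun r => j - 1 - r) ?_ ?_ ?_ ?_ ?_
  · intro a ha; simp only [Finset.mem_Ico] at ha; simp only [Finset.mem_range]; omega
  · intro a ha; simp only [Finset.mem_range] at ha; simp only [Finset.mem_Ico]; omega
  · intro a ha; simp only [Finset.mem_Ico] at ha; show j - 1 - (j - 1 - a) = a; omega
  · intro a ha; simp only [Finset.mem_range] at ha; show j - 1 - (j - 1 - a) = a; omega
  · intro a _; rfl

lemma filter_range_le' (m t : ℕ) (ht : t < m) :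
    (Finset.range m).filter (fun k => k ≤ t) = Finset.range (t + 1) := by
  ext k; simp only [Finset.mem_filter, Finset.mem_range]; omega

lemma sumL3 (g : ℕ → ℤ) (m j t : ℕ) (ht : t < m) :
    ∑ i ∈ Finset.univ.filter (fun i : Fin m => (i : ℕ) ≤ t), g (j + (i : ℕ))
      = ∑ k ∈ Finset.Ico j (j + t + 1), g k := by
  rw [Finset.sum_filter, Fin.sum_univ_eq_sum_range (fun k => if k ≤ t then g (j + k) else 0) m,
    ← Finset.sum_filter, filter_range_le' m t ht, Finset.sum_Ico_eq_sum_range]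
  have : j + t + 1 - j = t + 1 := by omega
  rw [this]

/-! ### Events -/

variable {Ω : Type*} {m0 : MeasurableSpace Ω}

/-- prefix sums up to `t+1`, for all `t < j`, are negative -/
def NegPre (R : ℕ → Ω → ℤ) (j : ℕ) : Set Ω :=
  {ω | ∀ t < j, (∑ k ∈ Finset.range (t + 1), R k ω) < 0}

/-- the sums `S j - S n`, for `n < j`, are negative -/
def NegRev (R : ℕ → Ω → ℤ) (j : ℕ) : Set Ω :=
  {ω | ∀ n < j, (∑ k ∈ Finset.Ico n j, R k ω) < 0}

/-- the sums `S (j+t+1) - S j`, for `t < m`, are nonnegative -/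
def PosBlock (R : ℕ → Ω → ℤ) (j m : ℕ) : Set Ω :=
  {ω | ∀ t < m, 0 ≤ ∑ k ∈ Finset.Ico j (j + t + 1), R k ω}

/-- tuple of `R (f i)` -/
def tup (R : ℕ → Ω → ℤ) (m : ℕ) (f : Fin m → ℕ) : Ω → Fin m → ℤ := fun ω i => R (f i) ω

def EnegSuf (j : ℕ) : Set (Fin j → ℤ) :=
  {y | ∀ n < j, (∑ i ∈ Finset.univ.filter (fun i : Fin j => n ≤ (i : ℕ)), y i) < 0}

def EnegPre (j : ℕ) : Set (Fin j → ℤ) :=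
  {y | ∀ t < j, (∑ i ∈ Finset.univ.filter (fun i : Fin j => (i : ℕ) ≤ t), y i) < 0}

def Epos (m : ℕ) : Set (Fin m → ℤ) :=
  {y | ∀ t < m, 0 ≤ ∑ i ∈ Finset.univ.filter (fun i : Fin m => (i : ℕ) ≤ t), y i}

variable (R : ℕ → Ω → ℤ)

lemma tup_meas (hmeas : ∀ n, Measurable (R n)) (m : ℕ) (f : Fin m → ℕ) :
    Measurable (tup R m f) :=
  measurable_pi_lambda _ (fun i => hmeas (f i))

lemma preim_negrev (j : ℕ) : tup R j (fun i => (i : ℕ)) ⁻¹' EnegSuf j = NegRev R j := by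
  ext ω
  simp only [Set.mem_preimage, EnegSuf, NegRev, Set.mem_setOf_eq, tup]
  refine forall₂_congr (fun n hn => ?_)
  rw [sumL1 (fun k => R k ω) j n]

lemma preim_negpre (j : ℕ) :
    tup R j (fun i => j - 1 - (i : ℕ)) ⁻¹' EnegSuf j = NegPre R j := by
  ext ω
  simp only [Set.mem_preimage, EnegSuf, NegPre, Set.mem_setOf_eq, tup]
  constructor
  · intro h t ht
    have h2 := h (j - 1 - t) (by omega)
    rw [sumL2 (fun k => R k ω) j (j - 1 - t)] at h2
    have : j - (j - 1 - t) = t + 1 := by omega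
    rwa [this] at h2
  · intro h n hn
    rw [sumL2 (fun k => R k ω) j n]
    have : j - n = (j - n - 1) + 1 := by omega
    rw [this]
    exact h (j - n - 1) (by omega)

lemma preim_negpre' (j : ℕ) :
    tup R j (fun i => (i : ℕ)) ⁻¹' EnegPre j = NegPre R j := by
  ext ω
  simp only [Set.mem_preimage, EnegPre, NegPre, Set.mem_setOf_eq, tup]
  refine forall₂_congr (fun t ht => ?_)
  have := sumL3 (fun k => R k ω) j 0 t ht
  simp only [Nat.zero_add, zero_add] at this
  rw [this, Finset.range_eq_Ico]

lemma preim_posblock (j m : ℕ) :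
    tup R m (fun i => j + (i : ℕ)) ⁻¹' Epos m = PosBlock R j m := by
  ext ω
  simp only [Set.mem_preimage, Epos, PosBlock, Set.mem_setOf_eq, tup]
  refine forall₂_congr (fun t ht => ?_)
  rw [sumL3 (fun k => R k ω) m j t ht]

lemma meas_negpre (hmeas : ∀ n, Measurable (R n)) (j : ℕ) : MeasurableSet (NegPre R j) := by
  rw [← preim_negpre' R j]
  exact tup_meas R hmeas j _ (Set.to_countable _).measurableSet

lemma meas_negrev (hmeas : ∀ n, Measurable (R n)) (j : ℕ) : MeasurableSet (NegRev R j) := by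
  rw [← preim_negrev R j]
  exact tup_meas R hmeas j _ (Set.to_countable _).measurableSet

lemma meas_posblock (hmeas : ∀ n, Measurable (R n)) (j m : ℕ) :
    MeasurableSet (PosBlock R j m) := by
  rw [← preim_posblock R j m]
  exact tup_meas R hmeas m _ (Set.to_countable _).measurableSet


variable (μ : Measure Ω) [IsProbabilityMeasure μ]

lemma tup_law (hmeas : ∀ n, Measurable (R n))
    (hindep : iIndepFun R μ)
    (hident : ∀ n, IdentDistrib (R n) (R 0) μ μ)
    (m : ℕ) (f : Fin m → ℕ) (hf : Function.Injective f) :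
    Measure.map (tup R m f) μ = Measure.pi (fun _ => Measure.map (R 0) μ) := by
  classical
  haveI : IsProbabilityMeasure (Measure.map (R 0) μ) :=
    Measure.isProbabilityMeasure_map (hmeas 0).aemeasurable
  refine (Measure.pi_eq ?_).symm
  intro s hs
  rw [Measure.map_apply (tup_meas R hmeas m f) (MeasurableSet.univ_pi hs)]
  have hpre : tup R m f ⁻¹' Set.univ.pi s = ⋂ i : Fin m, R (f i) ⁻¹' s i := by
    ext ω; simp [tup, Set.mem_pi]
  set s' : ℕ → Set ℤ := fun n => if h : ∃ i, f i = n then s h.choose else Set.univ with hs'def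
  have hs' : ∀ i, s' (f i) = s i := by
    intro i
    have h : ∃ i', f i' = f i := ⟨i, rfl⟩
    simp only [hs'def, dif_pos h]
    rw [hf h.choose_spec]
  have h1 : (⋂ i : Fin m, R (f i) ⁻¹' s i)
      = ⋂ n ∈ Finset.image f Finset.univ, R n ⁻¹' s' n := by
    ext ω
    simp only [Set.mem_iInter, Set.mem_preimage, Finset.mem_image, Finset.mem_univ, true_and]
    constructor
    · rintro h n ⟨i, rfl⟩
      rw [hs']; exact h i
    · intro h i
      rw [← hs']; exact h (f i) ⟨i, rfl⟩
  rw [hpre, h1,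
    hindep.measure_inter_preimage_eq_mul (Finset.image f Finset.univ) (sets := s')
      (fun n _ => trivial),
    Finset.prod_image (fun i _ j _ h => hf h)]
  refine Finset.prod_congr rfl (fun i _ => ?_)
  rw [hs', ← Measure.map_apply (hmeas (f i)) trivial, (hident (f i)).map_eq]

lemma tup_measure_preimage_eq (hmeas : ∀ n, Measurable (R n))
    (hindep : iIndepFun R μ)
    (hident : ∀ n, IdentDistrib (R n) (R 0) μ μ)
    (m : ℕ) (f g : Fin m → ℕ) (hf : Function.Injective f) (hg : Function.Injective g)
    (E : Set (Fin m → ℤ)) :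
    μ (tup R m f ⁻¹' E) = μ (tup R m g ⁻¹' E) := by
  have hE : MeasurableSet E := (Set.to_countable E).measurableSet
  rw [← Measure.map_apply (tup_meas R hmeas m f) hE,
    ← Measure.map_apply (tup_meas R hmeas m g) hE,
    tup_law R μ hmeas hindep hident m f hf, tup_law R μ hmeas hindep hident m g hg]

lemma tup_indep (hmeas : ∀ n, Measurable (R n))
    (hindep : iIndepFun R μ)
    (a b : ℕ) (f : Fin a → ℕ) (g : Fin b → ℕ) (hfg : ∀ i j, f i ≠ g j) :
    IndepFun (tup R a f) (tup R b g) μ := by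
  classical
  have hdisj : Disjoint (Finset.image f Finset.univ) (Finset.image g Finset.univ) := by
    rw [Finset.disjoint_left]
    intro n hn1 hn2
    rw [Finset.mem_image] at hn1 hn2
    obtain ⟨i, _, hi⟩ := hn1
    obtain ⟨j, _, hj⟩ := hn2
    exact hfg i j (hi.trans hj.symm)
  have base := hindep.indepFun_finset (Finset.image f Finset.univ)
    (Finset.image g Finset.univ) hdisj hmeas
  have hφ : Measurable (fun (y : (i : (Finset.image f Finset.univ : Finset ℕ)) → ℤ)
      (i : Fin a) => y ⟨f i, Finset.mem_image_of_mem f (Finset.mem_univ i)⟩) :=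
    measurable_pi_lambda _ (fun i => measurable_pi_apply _)
  have hψ : Measurable (fun (y : (i : (Finset.image g Finset.univ : Finset ℕ)) → ℤ)
      (i : Fin b) => y ⟨g i, Finset.mem_image_of_mem g (Finset.mem_univ i)⟩) :=
    measurable_pi_lambda _ (fun i => measurable_pi_apply _)
  exact base.comp hφ hψ


/-! ### Measure identities -/

lemma inj_val (j : ℕ) : Function.Injective (fun i : Fin j => (i : ℕ)) :=
  Fin.val_injective

lemma inj_rev (j : ℕ) : Function.Injective (fun i : Fin j => j - 1 - (i : ℕ)) := by
  intro a b h
  have ha := a.2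
  have hb := b.2
  simp only at h
  exact Fin.ext (by omega)

lemma inj_shift (j m : ℕ) : Function.Injective (fun i : Fin m => j + (i : ℕ)) := by
  intro a b h
  simp only at h
  exact Fin.ext (by omega)

lemma measure_negrev (hmeas : ∀ n, Measurable (R n))
    (hindep : iIndepFun R μ)
    (hident : ∀ n, IdentDistrib (R n) (R 0) μ μ) (j : ℕ) :
    μ (NegRev R j) = μ (NegPre R j) := by
  rw [← preim_negrev R j, ← preim_negpre R j]
  exact tup_measure_preimage_eq R μ hmeas hindep hident j _ _ (inj_val j) (inj_rev j) _

lemma measure_posblock (hmeas : ∀ n, Measurable (R n))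
    (hindep : iIndepFun R μ)
    (hident : ∀ n, IdentDistrib (R n) (R 0) μ μ) (j m : ℕ) :
    μ (PosBlock R j m) = μ (PosBlock R 0 m) := by
  rw [← preim_posblock R j m, ← preim_posblock R 0 m]
  exact tup_measure_preimage_eq R μ hmeas hindep hident m _ _ (inj_shift j m) (inj_shift 0 m) _

lemma measure_inter_negrev_posblock (hmeas : ∀ n, Measurable (R n))
    (hindep : iIndepFun R μ) (j m : ℕ) :
    μ (NegRev R j ∩ PosBlock R j m) = μ (NegRev R j) * μ (PosBlock R j m) := by
  have hi := tup_indep R μ hmeas hindep j m (fun i => (i : ℕ)) (fun i => j + (i : ℕ))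
    (fun i i' => by show (i : ℕ) ≠ j + (i' : ℕ); have := i.2; omega)
  rw [← preim_negrev R j, ← preim_posblock R j m]
  exact hi.measure_inter_preimage_eq_mul _ _ (Set.to_countable _).measurableSet
    (Set.to_countable _).measurableSet

lemma sum_bound (hmeas : ∀ n, Measurable (R n))
    (hindep : iIndepFun R μ)
    (hident : ∀ n, IdentDistrib (R n) (R 0) μ μ) (N : ℕ) :
    ∑ j ∈ Finset.range (N + 1), μ (NegPre R j) * μ (⋂ m', PosBlock R 0 m') ≤ 1 := by
  have hdisj : (↑(Finset.range (N + 1)) : Set ℕ).PairwiseDisjoint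
      (fun j => NegRev R j ∩ PosBlock R j (N - j)) := by
    have key : ∀ j l : ℕ, j < N + 1 → l < N + 1 → j < l →
        Disjoint (NegRev R j ∩ PosBlock R j (N - j)) (NegRev R l ∩ PosBlock R l (N - l)) := by
      intro j l hj hl h
      refine Set.disjoint_left.mpr (fun ω hω hω' => ?_)
      obtain ⟨hneg, hpos⟩ := hω
      obtain ⟨hneg', hpos'⟩ := hω'
      have h1 := hneg' j h
      have h2 := hpos (l - j - 1) (by omega)
      have heq : j + (l - j - 1) + 1 = l := by omega
      rw [heq] at h2
      exact absurd h2 (not_le.mpr h1)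
    intro j hj l hl hne
    simp only [Finset.coe_range, Set.mem_Iio] at hj hl
    rcases hne.lt_or_gt with h | h
    · exact key j l hj hl h
    · exact (key l j hl hj h).symm
  have hmeasC : ∀ b ∈ Finset.range (N + 1),
      MeasurableSet (NegRev R b ∩ PosBlock R b (N - b)) :=
    fun b _ => (meas_negrev R hmeas b).inter (meas_posblock R hmeas b (N - b))
  calc ∑ j ∈ Finset.range (N + 1), μ (NegPre R j) * μ (⋂ m', PosBlock R 0 m')
      ≤ ∑ j ∈ Finset.range (N + 1), μ (NegRev R j) * μ (PosBlock R j (N - j)) := by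
        refine Finset.sum_le_sum (fun j _ => ?_)
        rw [measure_negrev R μ hmeas hindep hident j]
        refine mul_le_mul_right ?_ _
        refine le_trans ?_ (le_of_eq (measure_posblock R μ hmeas hindep hident j (N - j)).symm)
        exact measure_mono (Set.iInter_subset _ (N - j))
    _ = ∑ j ∈ Finset.range (N + 1), μ (NegRev R j ∩ PosBlock R j (N - j)) := by
        refine Finset.sum_congr rfl (fun j _ => ?_)
        rw [measure_inter_negrev_posblock R μ hmeas hindep j (N - j)]
    _ = μ (⋃ j ∈ Finset.range (N + 1), NegRev R j ∩ PosBlock R j (N - j)) :=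
        (measure_biUnion_finset hdisj hmeasC).symm
    _ ≤ 1 := by
        rw [← measure_univ (μ := μ)]
        exact measure_mono (Set.subset_univ _)

lemma tsum_w_le (hmeas : ∀ n, Measurable (R n))
    (hindep : iIndepFun R μ)
    (hident : ∀ n, IdentDistrib (R n) (R 0) μ μ) :
    ∑' j, μ (NegPre R j) ≤ (μ (⋂ m', PosBlock R 0 m'))⁻¹ := by
  rw [ENNReal.le_inv_iff_mul_le, ← ENNReal.tsum_mul_right, ENNReal.tsum_eq_iSup_sum]
  refine iSup_le (fun s => ?_)
  have hsub : s ⊆ Finset.range (s.sup id + 1) := by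
    intro a ha
    have := Finset.le_sup (f := id) ha
    simp only [id] at this
    exact Finset.mem_range.mpr (by omega)
  exact le_trans (Finset.sum_le_sum_of_subset hsub)
    (sum_bound R μ hmeas hindep hident (s.sup id))


/-! ### Analysis helpers -/

lemma integrable_mul_of_memL2 {f g : Ω → ℝ} (hf : MemLp f 2 μ) (hg : MemLp g 2 μ) :
    Integrable (fun ω => f ω * g ω) μ := by
  have h := (((hf.add hg).integrable_sq.sub hf.integrable_sq).sub hg.integrable_sq).div_const 2
  refine h.congr (Filter.EventuallyEq.of_eq (funext fun ω => ?_))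
  simp only [Pi.sub_apply, Pi.add_apply]
  ring

lemma expect_last_mul_prefix (hmeas : ∀ n, Measurable (R n))
    (hindep : iIndepFun R μ)
    (l : ℕ) (φ : ℤ → ℝ) (F : (Fin l → ℤ) → ℝ)
    (hφint : Integrable (fun ω => φ (R l ω)) μ)
    (hFint : Integrable (fun ω => F (tup R l (fun i => (i : ℕ)) ω)) μ) :
    ∫ ω, φ (R l ω) * F (tup R l (fun i => (i : ℕ)) ω) ∂μ
      = (∫ ω, φ (R l ω) ∂μ) * ∫ ω, F (tup R l (fun i => (i : ℕ)) ω) ∂μ := by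
  have base := tup_indep R μ hmeas hindep 1 l (fun _ => l) (fun i => (i : ℕ))
    (fun i i' => by show l ≠ (i' : ℕ); have := i'.2; omega)
  have hi : IndepFun (fun ω => φ (R l ω)) (fun ω => F (tup R l (fun i => (i : ℕ)) ω)) μ :=
    base.comp (φ := fun y : Fin 1 → ℤ => φ (y 0)) (ψ := F)
      (measurable_of_countable _) (measurable_of_countable _)
  exact hi.integral_fun_mul_eq_mul_integral hφint.aestronglyMeasurable hFint.aestronglyMeasurable

lemma indicator_one_comp (l : ℕ) (ω : Ω) :
    Set.indicator (EnegPre l) (fun _ => (1 : ℝ)) (tup R l (fun i => (i : ℕ)) ω)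
      = (NegPre R l).indicator (fun _ => (1 : ℝ)) ω := by
  by_cases h : ω ∈ NegPre R l
  · have h' : tup R l (fun i => (i : ℕ)) ω ∈ EnegPre l := by
      rw [← preim_negpre' R l] at h; exact h
    simp [Set.indicator_of_mem, h, h']
  · have h' : tup R l (fun i => (i : ℕ)) ω ∉ EnegPre l := by
      rw [← preim_negpre' R l] at h; exact h
    simp [Set.indicator_of_notMem, h, h']

lemma integral_indicator_negpre (hmeas : ∀ n, Measurable (R n))
    (hindep : iIndepFun R μ)
    (l : ℕ) (φ : ℤ → ℝ) (hφ : Integrable (fun ω => φ (R l ω)) μ) :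
    ∫ ω, (NegPre R l).indicator (fun ω' => φ (R l ω')) ω ∂μ
      = (∫ ω, φ (R l ω) ∂μ) * (μ (NegPre R l)).toReal := by
  have h1 : (NegPre R l).indicator (fun ω' => φ (R l ω')) = fun ω => φ (R l ω) *
      Set.indicator (EnegPre l) (fun _ => (1 : ℝ)) (tup R l (fun i => (i : ℕ)) ω) := by
    funext ω
    rw [indicator_one_comp R l ω]
    by_cases h : ω ∈ NegPre R l <;> simp [h]
  have hFint : Integrable
      (fun ω => Set.indicator (EnegPre l) (fun _ => (1 : ℝ))
        (tup R l (fun i => (i : ℕ)) ω)) μ := by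
    simp only [indicator_one_comp R l]
    exact (integrable_const (1 : ℝ)).indicator (meas_negpre R hmeas l)
  rw [h1, expect_last_mul_prefix R μ hmeas hindep l φ _ hφ hFint]
  congr 1
  simp only [indicator_one_comp R l]
  exact integral_indicator_one (meas_negpre R hmeas l)

lemma negpre_anti {k l : ℕ} (hkl : k ≤ l) : NegPre R l ⊆ NegPre R k :=
  fun ω h t ht => h t (lt_of_lt_of_le ht hkl)

lemma integral_cross (hmeas : ∀ n, Measurable (R n))
    (hindep : iIndepFun R μ)
    (k l : ℕ) (hkl : k < l)
    (hl1 : Integrable (fun ω => (R l ω : ℝ)) μ)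
    (hk2 : MemLp (fun ω => (R k ω : ℝ)) 2 μ) :
    ∫ ω, ((NegPre R k).indicator (fun ω' => (R k ω' : ℝ)) ω
        * (NegPre R l).indicator (fun ω' => (R l ω' : ℝ)) ω) ∂μ
      = (∫ ω, (R l ω : ℝ) ∂μ)
        * ∫ ω, (NegPre R l).indicator (fun ω' => (R k ω' : ℝ)) ω ∂μ := by
  set F : (Fin l → ℤ) → ℝ :=
    fun y => Set.indicator (EnegPre l) (fun y' => ((y' ⟨k, hkl⟩ : ℤ) : ℝ)) y with hF
  have hcomp : ∀ ω, F (tup R l (fun i => (i : ℕ)) ω)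
      = (NegPre R l).indicator (fun ω' => (R k ω' : ℝ)) ω := by
    intro ω
    by_cases h : ω ∈ NegPre R l
    · have h' : tup R l (fun i => (i : ℕ)) ω ∈ EnegPre l := by
        rw [← preim_negpre' R l] at h; exact h
      simp only [hF, Set.indicator_of_mem h', Set.indicator_of_mem h]
      rfl
    · have h' : tup R l (fun i => (i : ℕ)) ω ∉ EnegPre l := by
        rw [← preim_negpre' R l] at h; exact h
      simp only [hF, Set.indicator_of_notMem h', Set.indicator_of_notMem h]
  have hpt : (fun ω => ((NegPre R k).indicator (fun ω' => (R k ω' : ℝ)) ω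
      * (NegPre R l).indicator (fun ω' => (R l ω' : ℝ)) ω))
      = fun ω => (R l ω : ℝ) * F (tup R l (fun i => (i : ℕ)) ω) := by
    funext ω
    rw [hcomp ω]
    by_cases h : ω ∈ NegPre R l
    · have hk' : ω ∈ NegPre R k := negpre_anti R (le_of_lt hkl) h
      simp only [Set.indicator_of_mem h, Set.indicator_of_mem hk']
      ring
    · simp only [Set.indicator_of_notMem h, mul_zero, zero_mul]
  have hFint : Integrable (fun ω => F (tup R l (fun i => (i : ℕ)) ω)) μ := by
    simp only [hcomp]
    exact ((hk2.indicator (meas_negpre R hmeas l)).integrable one_le_two)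
  rw [hpt, expect_last_mul_prefix R μ hmeas hindep l (fun z => (z : ℝ)) F hl1 hFint]
  simp only [hcomp]

lemma indicator_sq (s : Set Ω) (f : Ω → ℝ) :
    (fun ω => (s.indicator f ω)^2) = s.indicator (fun ω' => (f ω')^2) := by
  funext ω
  by_cases h : ω ∈ s <;> simp [h]

lemma integral_sq_sum (hmeas : ∀ n, Measurable (R n))
    (hindep : iIndepFun R μ)
    (hident : ∀ n, IdentDistrib (R n) (R 0) μ μ)
    (h2 : MemLp (fun ω => (R 0 ω : ℝ)) 2 μ)
    (hm0 : ∫ ω, (R 0 ω : ℝ) ∂μ = 0) (s : Finset ℕ) :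
    ∫ ω, (∑ k ∈ s, (NegPre R k).indicator (fun ω' => (R k ω' : ℝ)) ω)^2 ∂μ
      = (∫ ω, ((R 0 ω : ℝ))^2 ∂μ) * ∑ k ∈ s, (μ (NegPre R k)).toReal := by
  have hid : ∀ k, IdentDistrib (fun ω => (R k ω : ℝ)) (fun ω => (R 0 ω : ℝ)) μ μ :=
    fun k => (hident k).comp measurable_from_top
  have hL2 : ∀ k, MemLp (fun ω => (R k ω : ℝ)) 2 μ := fun k => (hid k).symm.memLp_snd h2
  have hm1k : ∀ k, ∫ ω, (R k ω : ℝ) ∂μ = 0 := fun k => (hid k).integral_eq.trans hm0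
  have hqk : ∀ k, ∫ ω, ((R k ω : ℝ))^2 ∂μ = ∫ ω, ((R 0 ω : ℝ))^2 ∂μ := fun k =>
    ((hident k).comp (measurable_from_top (f := fun z : ℤ => ((z : ℝ))^2))).integral_eq
  have hIL2 : ∀ k, MemLp ((NegPre R k).indicator (fun ω' => (R k ω' : ℝ))) 2 μ :=
    fun k => (hL2 k).indicator (meas_negpre R hmeas k)
  have hcross : ∀ k ∈ s, ∀ l ∈ s, k ≠ l →
      ∫ ω, ((NegPre R k).indicator (fun ω' => (R k ω' : ℝ)) ω
        * (NegPre R l).indicator (fun ω' => (R l ω' : ℝ)) ω) ∂μ = 0 := by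
    have key : ∀ k l, k < l →
        ∫ ω, ((NegPre R k).indicator (fun ω' => (R k ω' : ℝ)) ω
          * (NegPre R l).indicator (fun ω' => (R l ω' : ℝ)) ω) ∂μ = 0 := by
      intro k l hkl
      rw [integral_cross R μ hmeas hindep k l hkl ((hL2 l).integrable one_le_two) (hL2 k),
        hm1k l, zero_mul]
    intro k _ l _ hne
    rcases hne.lt_or_gt with h | h
    · exact key k l h
    · rw [← key l k h]
      congr 1
      funext ω
      ring
  have hdiag : ∀ k, ∫ ω, ((NegPre R k).indicator (fun ω' => (R k ω' : ℝ)) ω)^2 ∂μ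
      = (∫ ω, ((R 0 ω : ℝ))^2 ∂μ) * (μ (NegPre R k)).toReal := by
    intro k
    have : (fun ω => ((NegPre R k).indicator (fun ω' => (R k ω' : ℝ)) ω)^2)
        = (NegPre R k).indicator (fun ω' => ((R k ω' : ℝ))^2) := indicator_sq _ _
    rw [this, integral_indicator_negpre R μ hmeas hindep k (fun z => ((z : ℝ))^2)
      (hL2 k).integrable_sq, hqk k]
  have hexp : (fun ω => (∑ k ∈ s, (NegPre R k).indicator (fun ω' => (R k ω' : ℝ)) ω)^2)
      = fun ω => ∑ k ∈ s, ∑ l ∈ s,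
        ((NegPre R k).indicator (fun ω' => (R k ω' : ℝ)) ω
          * (NegPre R l).indicator (fun ω' => (R l ω' : ℝ)) ω) := by
    funext ω
    rw [sq, Finset.sum_mul_sum]
  rw [hexp]
  rw [integral_finset_sum s (fun k _ => integrable_finset_sum s (fun l _ =>
    integrable_mul_of_memL2 μ (hIL2 k) (hIL2 l)))]
  have : ∀ k ∈ s, ∫ ω, (∑ l ∈ s,
      ((NegPre R k).indicator (fun ω' => (R k ω' : ℝ)) ω
        * (NegPre R l).indicator (fun ω' => (R l ω' : ℝ)) ω)) ∂μ
      = (∫ ω, ((R 0 ω : ℝ))^2 ∂μ) * (μ (NegPre R k)).toReal := by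
    intro k hk
    rw [integral_finset_sum s (fun l _ => integrable_mul_of_memL2 μ (hIL2 k) (hIL2 l))]
    rw [Finset.sum_eq_single_of_mem k hk (fun l hl hne => hcross k hk l hl (Ne.symm hne))]
    rw [← hdiag k]
    congr 1
    funext ω
    ring
  rw [Finset.sum_congr rfl this, ← Finset.mul_sum]

end IntRW


/-- **Almost-sure hitting for integer random walks with nonpositive drift.**
For an i.i.d. sequence `{R_n}` of integer-valued random variables with
`E(R_1) ≤ 0` and `0 < Var(R_1) < ∞`, the walk `X_n = x + Σ_{k<n} R_k`
drops to `≤ 0` almost surely, from any initial value `x ∈ ℤ`. -/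
theorem integer_random_walk_as_hitting
    {Ω : Type*} {m0 : MeasurableSpace Ω} (μ : Measure Ω) [IsProbabilityMeasure μ]
    (R : ℕ → Ω → ℤ) (hmeas : ∀ n, Measurable (R n))
    (hindep : iIndepFun R μ)
    (hident : ∀ n, IdentDistrib (R n) (R 0) μ μ)
    (hmean : ∫ ω, (R 0 ω : ℝ) ∂μ ≤ 0)
    (h2 : MemLp (fun ω => (R 0 ω : ℝ)) 2 μ)
    (hvar : 0 < variance (fun ω => (R 0 ω : ℝ)) μ) :
    ∀ x : ℤ,
      μ {ω | ∃ n : ℕ, x + ∑ k ∈ Finset.range n, R k ω ≤ 0} = 1 := by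
  classical
  have hR : ∀ k, Measurable fun ω => ((R k ω : ℤ) : ℝ) :=
    fun k => measurable_from_top.comp (hmeas k)
  have hid : ∀ k, IdentDistrib (fun ω => (R k ω : ℝ)) (fun ω => (R 0 ω : ℝ)) μ μ :=
    fun k => (hident k).comp measurable_from_top
  have hL2 : ∀ k, MemLp (fun ω => (R k ω : ℝ)) 2 μ := fun k => (hid k).symm.memLp_snd h2
  -- Step 1 : the event that the walk increments stay nonnegative forever has measure zero
  have hv0 : μ (⋂ m', IntRW.PosBlock R 0 m') = 0 := by
    by_contra hv
    have hwtop : (∑' j, μ (IntRW.NegPre R j)) ≠ ⊤ :=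
      ne_top_of_le_ne_top (ENNReal.inv_ne_top.mpr hv) (IntRW.tsum_w_le R μ hmeas hindep hident)
    set w : ℕ → ℝ := fun j => (μ (IntRW.NegPre R j)).toReal with hwdef
    have hsumw : Summable w := ENNReal.summable_toReal hwtop
    have hwnn : ∀ j, 0 ≤ w j := fun j => ENNReal.toReal_nonneg
    have hw0 : w 0 = 1 := by
      have h1 : IntRW.NegPre R 0 = Set.univ := by
        ext ω; simp [IntRW.NegPre]
      simp [hwdef, h1]
    have hbadset : {ω | ¬ ∃ t, 0 ≤ ∑ k ∈ Finset.range (t + 1), R k ω}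
        = ⋂ j, IntRW.NegPre R j := by
      ext ω
      simp only [Set.mem_iInter, Set.mem_setOf_eq, not_exists, not_le, IntRW.NegPre]
      constructor
      · intro h j t _; exact h t
      · intro h t; exact h (t + 1) t (by omega)
    have hbad : μ (⋂ j, IntRW.NegPre R j) = 0 := by
      by_contra hb
      apply hwtop
      refine top_le_iff.mp ?_
      calc (⊤ : ℝ≥0∞) = ∑' _ : ℕ, μ (⋂ j, IntRW.NegPre R j) :=
            (ENNReal.tsum_const_eq_top_of_ne_zero hb).symm
        _ ≤ ∑' j, μ (IntRW.NegPre R j) :=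
            ENNReal.tsum_le_tsum (fun j => measure_mono (Set.iInter_subset _ j))
    have hgood : ∀ᵐ ω ∂μ, ∃ t, 0 ≤ ∑ k ∈ Finset.range (t + 1), R k ω := by
      rw [MeasureTheory.ae_iff]
      rw [show {ω | ¬ ∃ t, 0 ≤ ∑ k ∈ Finset.range (t + 1), R k ω}
        = ⋂ j, IntRW.NegPre R j from hbadset]
      exact hbad
    -- indicators of "still negative" times the increments
    set I : ℕ → Ω → ℝ := fun k => (IntRW.NegPre R k).indicator (fun ω => (R k ω : ℝ)) with hIdef
    have hImeas : ∀ k, Measurable (I k) := fun k => (hR k).indicator (IntRW.meas_negpre R hmeas k)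
    have hIL2 : ∀ k, MemLp (I k) 2 μ := fun k => (hL2 k).indicator (IntRW.meas_negpre R hmeas k)
    have hEI : ∀ k, ∫ ω, I k ω ∂μ = (∫ ω, (R 0 ω : ℝ) ∂μ) * w k := by
      intro k
      rw [hIdef]
      rw [IntRW.integral_indicator_negpre R μ hmeas hindep k (fun z => (z : ℝ))
        ((hL2 k).integrable one_le_two)]
      rw [(hid k).integral_eq]
    have hEIabs : ∀ k, ∫ ω, |I k ω| ∂μ = (∫ ω, |(R 0 ω : ℝ)| ∂μ) * w k := by
      intro k
      have h1 : (fun ω => |I k ω|) = (IntRW.NegPre R k).indicator (fun ω => |(R k ω : ℝ)|) := by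
        funext ω; by_cases h : ω ∈ IntRW.NegPre R k <;> simp [hIdef, h]
      rw [h1]
      rw [IntRW.integral_indicator_negpre R μ hmeas hindep k (fun z => |(z : ℝ)|)
        ((hL2 k).integrable one_le_two).abs]
      congr 1
      exact ((hident k).comp (measurable_from_top (f := fun z : ℤ => |(z : ℝ)|))).integral_eq
    set c1 : ℝ := ∫ ω, |(R 0 ω : ℝ)| ∂μ with hc1def
    have hc1nn : 0 ≤ c1 := integral_nonneg (fun ω => abs_nonneg _)
    set g : Ω → ℝ≥0∞ := fun ω => ∑' k, ENNReal.ofReal |I k ω| with hgdef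
    have hgmeas : Measurable g :=
      Measurable.ennreal_tsum (fun k => ENNReal.measurable_ofReal.comp (hImeas k).abs)
    have hIabsint : ∀ k, Integrable (fun ω => |I k ω|) μ :=
      fun k => ((hIL2 k).integrable one_le_two).abs
    have hglint : ∫⁻ ω, g ω ∂μ = ∑' k, ENNReal.ofReal (c1 * w k) := by
      rw [hgdef]
      rw [lintegral_tsum (f := fun k ω => ENNReal.ofReal |I k ω|)
        (fun k => ((hImeas k).abs.ennreal_ofReal).aemeasurable)]
      congr 1
      funext k
      rw [← ofReal_integral_eq_lintegral_ofReal (hIabsint k)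
        (Filter.Eventually.of_forall fun ω => abs_nonneg _)]
      rw [hEIabs k]
    have hgtop : ∫⁻ ω, g ω ∂μ ≠ ⊤ := by
      rw [hglint]
      have heq : ∀ k : ℕ, ENNReal.ofReal (c1 * w k)
          = ENNReal.ofReal c1 * μ (IntRW.NegPre R k) := by
        intro k
        rw [ENNReal.ofReal_mul hc1nn, ENNReal.ofReal_toReal (measure_ne_top μ _)]
      rw [tsum_congr heq, ENNReal.tsum_mul_left]
      exact ENNReal.mul_ne_top ENNReal.ofReal_ne_top hwtop
    have hgae : ∀ᵐ ω ∂μ, g ω < ⊤ := ae_lt_top hgmeas hgtop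
    set bound : Ω → ℝ := fun ω => (g ω).toReal with hbounddef
    have hboundint : Integrable bound μ :=
      integrable_toReal_of_lintegral_ne_top hgmeas.aemeasurable hgtop
    set Wn : ℕ → Ω → ℝ := fun n ω => ∑ k ∈ Finset.range n, I k ω with hWndef
    have hWnmeas : ∀ n, Measurable (Wn n) :=
      fun n => Finset.measurable_sum _ (fun k _ => hImeas k)
    have hWnle : ∀ n, ∀ ω, g ω < ⊤ → |Wn n ω| ≤ bound ω := by
      intro n ω hg
      refine le_trans (Finset.abs_sum_le_sum_abs _ _) ?_
      have h1 : ∑ k ∈ Finset.range n, |I k ω|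
          = (∑ k ∈ Finset.range n, ENNReal.ofReal |I k ω|).toReal := by
        rw [ENNReal.toReal_sum (fun k _ => ENNReal.ofReal_ne_top)]
        exact Finset.sum_congr rfl (fun k _ => (ENNReal.toReal_ofReal (abs_nonneg _)).symm)
      rw [h1]
      exact ENNReal.toReal_mono hg.ne (ENNReal.sum_le_tsum _)
    set W : Ω → ℝ := fun ω => if h : ∃ t, 0 ≤ ∑ k ∈ Finset.range (t + 1), R k ω
        then ((∑ k ∈ Finset.range (Nat.find h + 1), R k ω : ℤ) : ℝ) else 0 with hWdef
    have hWkey : ∀ ω (h : ∃ t, 0 ≤ ∑ k ∈ Finset.range (t + 1), R k ω),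
        ∀ n, Nat.find h + 1 ≤ n → Wn n ω = W ω := by
      intro ω h n hn
      have hIval : ∀ k, k ≤ Nat.find h → I k ω = (R k ω : ℝ) := by
        intro k hk
        have hmem : ω ∈ IntRW.NegPre R k := by
          intro t ht
          have h1 := Nat.find_min h (lt_of_lt_of_le ht hk)
          omega
        simp [hIdef, hmem]
      have hIzero : ∀ k, Nat.find h < k → I k ω = 0 := by
        intro k hk
        have hmem : ω ∉ IntRW.NegPre R k := by
          intro hmem
          have h1 := hmem (Nat.find h) hk
          have h2 := Nat.find_spec h
          omega
        simp [hIdef, hmem]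
      have hsplit : Wn n ω = ∑ k ∈ Finset.range (Nat.find h + 1), I k ω := by
        have hzero : ∑ k ∈ Finset.Ico (Nat.find h + 1) n, I k ω = 0 :=
          Finset.sum_eq_zero (fun k hk => hIzero k (by
            simp only [Finset.mem_Ico] at hk; omega))
        show (∑ k ∈ Finset.range n, I k ω) = _
        rw [← Finset.sum_range_add_sum_Ico (fun k => I k ω) hn, hzero, add_zero]
      rw [hsplit, hWdef]
      simp only [dif_pos h]
      rw [Finset.sum_congr rfl (fun k hk => hIval k (by
        simp only [Finset.mem_range] at hk; omega))]
      push_cast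
      rfl
    have hWtend : ∀ᵐ ω ∂μ, Filter.Tendsto (fun n => Wn n ω) atTop (𝓝 (W ω)) := by
      filter_upwards [hgood] with ω h
      have hev : ∀ᶠ n in atTop, Wn n ω = W ω :=
        Filter.eventually_atTop.mpr ⟨Nat.find h + 1, fun n hn => hWkey ω h n hn⟩
      exact Filter.Tendsto.congr' (hev.mono fun n hn => hn.symm) tendsto_const_nhds
    have hWnnae : ∀ᵐ ω ∂μ, 0 ≤ W ω := by
      filter_upwards [hgood] with ω h
      rw [hWdef]
      simp only [dif_pos h]
      exact_mod_cast Nat.find_spec h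
    have hWint : Integrable W μ := by
      have hWmeasae : AEStronglyMeasurable W μ :=
        aestronglyMeasurable_of_tendsto_ae atTop
          (fun n => (hWnmeas n).aestronglyMeasurable) hWtend
      refine Integrable.mono' hboundint hWmeasae ?_
      filter_upwards [hgood, hgae] with ω h hg
      rw [Real.norm_eq_abs, ← hWkey ω h (Nat.find h + 1) le_rfl]
      exact hWnle _ ω hg
    have hIntW : Filter.Tendsto (fun n => ∫ ω, Wn n ω ∂μ) atTop (𝓝 (∫ ω, W ω ∂μ)) := by
      refine tendsto_integral_of_dominated_convergence bound
        (fun n => (hWnmeas n).aestronglyMeasurable) hboundint ?_ hWtend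
      intro n
      filter_upwards [hgae] with ω hg
      rw [Real.norm_eq_abs]
      exact hWnle n ω hg
    have hEWn : ∀ n, ∫ ω, Wn n ω ∂μ
        = (∫ ω, (R 0 ω : ℝ) ∂μ) * ∑ k ∈ Finset.range n, w k := by
      intro n
      show ∫ ω, (∑ k ∈ Finset.range n, I k ω) ∂μ = _
      rw [integral_finset_sum _ (fun k _ => (hIL2 k).integrable one_le_two)]
      rw [Finset.sum_congr rfl (fun k _ => hEI k), ← Finset.mul_sum]
    have hSconv : Filter.Tendsto (fun n => ∑ k ∈ Finset.range n, w k) atTop (𝓝 (∑' k, w k)) :=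
      hsumw.hasSum.tendsto_sum_nat
    have hEW : ∫ ω, W ω ∂μ = (∫ ω, (R 0 ω : ℝ) ∂μ) * ∑' k, w k := by
      refine tendsto_nhds_unique hIntW ?_
      have h1 := hSconv.const_mul (∫ ω, (R 0 ω : ℝ) ∂μ)
      exact h1.congr (fun n => (hEWn n).symm)
    have htsumw1 : 1 ≤ ∑' k, w k := by
      rw [← hw0]
      exact Summable.le_tsum hsumw 0 (fun j _ => hwnn j)
    have hEWnonneg : 0 ≤ ∫ ω, W ω ∂μ := integral_nonneg_of_ae hWnnae
    have hprod : (∫ ω, (R 0 ω : ℝ) ∂μ) * (∑' k, w k) ≤ 0 :=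
      mul_nonpos_iff.mpr (Or.inr ⟨hmean, le_trans zero_le_one htsumw1⟩)
    have hEW0 : ∫ ω, W ω ∂μ = 0 := le_antisymm (hEW ▸ hprod) hEWnonneg
    have hm0 : ∫ ω, (R 0 ω : ℝ) ∂μ = 0 := by
      have h1 : (∫ ω, (R 0 ω : ℝ) ∂μ) * (∑' k, w k) = 0 := by rw [← hEW]; exact hEW0
      rcases mul_eq_zero.mp h1 with h | h
      · exact h
      · exfalso; rw [h] at htsumw1; linarith
    have hWzero : W =ᵐ[μ] 0 := (integral_eq_zero_iff_of_nonneg_ae hWnnae hWint).mp hEW0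
    -- Second moment contradiction
    set q : ℝ := ∫ ω, ((R 0 ω : ℝ)) ^ 2 ∂μ with hqdef
    have hqpos : 0 < q := by
      have hvd := ProbabilityTheory.variance_eq_sub h2
      simp only [Pi.pow_apply] at hvd
      rw [hm0] at hvd
      simp only [ne_eq, OfNat.ofNat_ne_zero, not_false_eq_true, zero_pow, sub_zero] at hvd
      rw [hqdef]
      rw [← hvd]
      exact hvar
    have hWn0 : ∀ᵐ ω ∂μ, Filter.Tendsto (fun n => Wn n ω) atTop (𝓝 0) := by
      filter_upwards [hWtend, hWzero] with ω h1 h2'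
      rwa [h2'] at h1
    have hsqint : ∀ s : Finset ℕ, Integrable (fun ω => (∑ k ∈ s, I k ω) ^ 2) μ :=
      fun s => (memLp_finset_sum s (fun k _ => hIL2 k)).integrable_sq
    have key1 : ∀ n j, n ≤ j → ∫⁻ ω, ENNReal.ofReal ((Wn j ω - Wn n ω) ^ 2) ∂μ
        = ENNReal.ofReal (q * ∑ k ∈ Finset.Ico n j, w k) := by
      intro n j hj
      have hdiff : ∀ ω, Wn j ω - Wn n ω = ∑ k ∈ Finset.Ico n j, I k ω := by
        intro ω
        show (∑ k ∈ Finset.range j, I k ω) - (∑ k ∈ Finset.range n, I k ω) = _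
        exact (Finset.sum_Ico_eq_sub (fun k => I k ω) hj).symm
      have hint : Integrable (fun ω => (Wn j ω - Wn n ω) ^ 2) μ := by
        simp only [hdiff]
        exact hsqint (Finset.Ico n j)
      rw [← ofReal_integral_eq_lintegral_ofReal hint
        (Filter.Eventually.of_forall fun ω => sq_nonneg _)]
      congr 1
      calc ∫ ω, (Wn j ω - Wn n ω) ^ 2 ∂μ
          = ∫ ω, (∑ k ∈ Finset.Ico n j, I k ω) ^ 2 ∂μ := by simp only [hdiff]
        _ = q * ∑ k ∈ Finset.Ico n j, w k :=
            IntRW.integral_sq_sum R μ hmeas hindep hident h2 hm0 (Finset.Ico n j)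
    have hfatou : ∀ n, q * ∑ k ∈ Finset.range n, w k ≤ q * ∑' k, w (k + n) := by
      intro n
      have htail : Summable (fun k => w (k + n)) := (summable_nat_add_iff n).mpr hsumw
      have hWmmeas : ∀ j, Measurable (fun ω => ENNReal.ofReal ((Wn j ω - Wn n ω) ^ 2)) :=
        fun j => ENNReal.measurable_ofReal.comp (((hWnmeas j).sub (hWnmeas n)).pow_const 2)
      have hf1 : ∫⁻ ω, ENNReal.ofReal ((Wn n ω) ^ 2) ∂μ
          ≤ liminf (fun j => ∫⁻ ω, ENNReal.ofReal ((Wn j ω - Wn n ω) ^ 2) ∂μ) atTop := by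
        refine le_trans (le_of_eq ?_) (lintegral_liminf_le hWmmeas)
        refine lintegral_congr_ae ?_
        filter_upwards [hWn0] with ω hω
        have h1 : Filter.Tendsto (fun j => ENNReal.ofReal ((Wn j ω - Wn n ω) ^ 2)) atTop
            (𝓝 (ENNReal.ofReal ((0 - Wn n ω) ^ 2))) := by
          refine (ENNReal.continuous_ofReal.tendsto _).comp ?_
          exact (hω.sub tendsto_const_nhds).pow 2
        rw [h1.liminf_eq, zero_sub, neg_sq]
      have hlhs : ∫⁻ ω, ENNReal.ofReal ((Wn n ω) ^ 2) ∂μ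
          = ENNReal.ofReal (q * ∑ k ∈ Finset.range n, w k) := by
        have h1 := key1 0 n (Nat.zero_le n)
        have h2' : ∀ ω, Wn n ω - Wn 0 ω = Wn n ω := by
          intro ω
          show Wn n ω - (∑ k ∈ Finset.range 0, I k ω) = Wn n ω
          simp
        simp only [h2'] at h1
        rw [h1]
        congr 1
        rw [Finset.range_eq_Ico]
      have hrhs : liminf (fun j => ∫⁻ ω, ENNReal.ofReal ((Wn j ω - Wn n ω) ^ 2) ∂μ) atTop
          = ENNReal.ofReal (q * ∑' k, w (k + n)) := by
        have htendS : Filter.Tendsto (fun j => ∑ k ∈ Finset.Ico n j, w k) atTop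
            (𝓝 (∑' k, w (k + n))) := by
          have h1 : ∀ j, ∑ k ∈ Finset.Ico n j, w k
              = ∑ k ∈ Finset.range (j - n), w (k + n) := by
            intro j
            rw [Finset.sum_Ico_eq_sum_range]
            exact Finset.sum_congr rfl (fun k _ => by rw [Nat.add_comm])
          have h2' := htail.hasSum.tendsto_sum_nat
          have h3 := h2'.comp (tendsto_sub_atTop_nat n)
          refine h3.congr (fun j => ?_)
          simp only [Function.comp]
          exact (h1 j).symm
        have h4 : Filter.Tendsto (fun j => ∫⁻ ω, ENNReal.ofReal ((Wn j ω - Wn n ω) ^ 2) ∂μ)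
            atTop (𝓝 (ENNReal.ofReal (q * ∑' k, w (k + n)))) := by
          have h5 : ∀ᶠ j in atTop, ∫⁻ ω, ENNReal.ofReal ((Wn j ω - Wn n ω) ^ 2) ∂μ
              = ENNReal.ofReal (q * ∑ k ∈ Finset.Ico n j, w k) :=
            Filter.eventually_atTop.mpr ⟨n, fun j hj => key1 n j hj⟩
          refine Filter.Tendsto.congr' (h5.mono fun j hj => hj.symm) ?_
          exact (ENNReal.continuous_ofReal.tendsto _).comp (htendS.const_mul q)
        exact h4.liminf_eq
      have hcomb := le_trans (le_of_eq hlhs.symm) (le_trans hf1 (le_of_eq hrhs))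
      have htailnn : 0 ≤ q * ∑' k, w (k + n) :=
        mul_nonneg (le_of_lt hqpos) (tsum_nonneg (fun k => hwnn _))
      exact (ENNReal.ofReal_le_ofReal_iff htailnn).mp hcomb
    have hcontr : ∀ n, 1 ≤ n → (1 : ℝ) ≤ ∑' k, w (k + n) := by
      intro n hn
      have h1 : (1 : ℝ) ≤ ∑ k ∈ Finset.range n, w k := by
        rw [← hw0]
        exact Finset.single_le_sum (fun k _ => hwnn k) (Finset.mem_range.mpr (by omega))
      have h2' := hfatou n
      have h3 : ∑ k ∈ Finset.range n, w k ≤ ∑' k, w (k + n) :=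
        le_of_mul_le_mul_left h2' hqpos
      linarith
    have hterm := tendsto_sum_nat_add w
    have hfinal : (1 : ℝ) ≤ 0 :=
      ge_of_tendsto hterm (Filter.eventually_atTop.mpr ⟨1, fun n hn => hcontr n hn⟩)
    linarith
  -- Step 2 : conclude
  intro x
  have hanti : ∀ j', Antitone (fun m' => IntRW.PosBlock R j' m') := by
    intro j' a b hab ω hω t ht
    exact hω t (lt_of_lt_of_le ht hab)
  have hDnull : ∀ j, μ (⋂ m', IntRW.PosBlock R j m') = 0 := by
    intro j
    have h1 : Filter.Tendsto (fun m' => μ (IntRW.PosBlock R j m')) atTop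
        (𝓝 (μ (⋂ m', IntRW.PosBlock R j m'))) :=
      tendsto_measure_iInter_atTop
        (fun m' => (IntRW.meas_posblock R hmeas j m').nullMeasurableSet) (hanti j)
        ⟨0, measure_ne_top μ _⟩
    have h0 : Filter.Tendsto (fun m' => μ (IntRW.PosBlock R j m')) atTop
        (𝓝 (μ (⋂ m', IntRW.PosBlock R 0 m'))) := by
      have heq : (fun m' => μ (IntRW.PosBlock R j m'))
          = fun m' => μ (IntRW.PosBlock R 0 m') :=
        funext (fun m' => IntRW.measure_posblock R μ hmeas hindep hident j m')
      rw [heq]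
      exact tendsto_measure_iInter_atTop
        (fun m' => (IntRW.meas_posblock R hmeas 0 m').nullMeasurableSet) (hanti 0)
        ⟨0, measure_ne_top μ _⟩
    rw [tendsto_nhds_unique h1 h0, hv0]
  have hcover : {ω | ∃ n : ℕ, x + ∑ k ∈ Finset.range n, R k ω ≤ 0}ᶜ
      ⊆ ⋃ j, ⋂ m', IntRW.PosBlock R j m' := by
    intro ω hω
    simp only [Set.mem_compl_iff, Set.mem_setOf_eq, not_exists, not_le] at hω
    have hbdd : ∀ n, 1 - x ≤ ∑ k ∈ Finset.range n, R k ω := by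
      intro n
      have := hω n
      omega
    obtain ⟨lb, ⟨n₀, hn₀⟩, hlb⟩ :=
      Int.exists_least_of_bdd (P := fun z => ∃ n, (∑ k ∈ Finset.range n, R k ω) = z)
        ⟨1 - x, fun z hz => by obtain ⟨n, hn⟩ := hz; rw [← hn]; exact hbdd n⟩
        ⟨∑ k ∈ Finset.range 0, R k ω, 0, rfl⟩
    refine Set.mem_iUnion.mpr ⟨n₀, Set.mem_iInter.mpr (fun m' => ?_)⟩
    intro t _
    have h1 : ∑ k ∈ Finset.Ico n₀ (n₀ + t + 1), R k ω
        = (∑ k ∈ Finset.range (n₀ + t + 1), R k ω) - ∑ k ∈ Finset.range n₀, R k ω :=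
      Finset.sum_Ico_eq_sub _ (by omega)
    rw [h1, hn₀]
    have h2' := hlb _ ⟨n₀ + t + 1, rfl⟩
    omega
  have hmeasT : MeasurableSet {ω | ∃ n : ℕ, x + ∑ k ∈ Finset.range n, R k ω ≤ 0} := by
    rw [show {ω | ∃ n : ℕ, x + ∑ k ∈ Finset.range n, R k ω ≤ 0}
      = ⋃ n, {ω | x + ∑ k ∈ Finset.range n, R k ω ≤ 0} from by ext ω; simp]
    refine MeasurableSet.iUnion (fun n => ?_)
    have hm : Measurable (fun ω => x + ∑ k ∈ Finset.range n, R k ω) :=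
      measurable_const.add (Finset.measurable_sum _ (fun k _ => hmeas k))
    exact hm (show MeasurableSet {z : ℤ | z ≤ 0} from trivial)
  rw [← prob_compl_eq_zero_iff hmeasT]
  exact measure_mono_null hcover (measure_iUnion_null hDnull)
end

section
/- Let {X_n}_{n∈ℕ₀} be independent random variables with X_0 ≡ 1/2 and, for n ≥ 1, P(X_n = 1) = e^{−1/n²} and P(X_n = −4n²) = 1 − e^{−1/n²}. Define Y_n := Σ_{j=0}^n X_j, and let F_n be the σ-algebra generated by X_0,…,X_n. Then: (a) each Y_n is integrable and for all n, E[Y_{n+1} | F_n] ≤ Y_n − 1.52 a.s., so {Y_n} is a supermartingale (indeed a ranking supermartingale) satisfying the LBCAD condition; (b) with Z := min{n : Y_n ≤ 0} (min ∅ := ∞), one has P(Z > n) = ∏_{j=1}^n e^{−1/j²} for all n, and consequently P(Z = ∞) = e^{−π²/6} > 0. Hence the nonnegativity condition in the difference-bounded supermartingale theorem cannot be dropped. -/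
open MeasureTheory ProbabilityTheory

/-- **Necessity of the nonnegativity condition (Example 3).**
With independent `X_n` where `X₀ ≡ 1/2`, `P(X_n = 1) = e^{−1/n²}`,
`P(X_n = −4n²) = 1 − e^{−1/n²}` (`n ≥ 1`), and `Y_n = Σ_{j≤n} X_j`,
`F_n = σ(X₀,…,X_n)`: each `Y_n` is integrable,
`E[Y_{n+1} | F_n] ≤ Y_n − 1.52` a.s. (so `{Y_n}` is a supermartingale, indeed a
ranking supermartingale, satisfying LBCAD), while with `Z = min {n | Y_n ≤ 0}` one
has `P(Z > n) = ∏_{j=1}^n e^{−1/j²}` and `P(Z = ∞) = e^{−π²/6} > 0`. -/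
theorem nonnegativity_condition_necessary
    {Ω : Type*} {m0 : MeasurableSpace Ω} (μ : Measure Ω) [IsProbabilityMeasure μ]
    (X : ℕ → Ω → ℝ) (hmeas : ∀ n, Measurable (X n))
    (hindep : iIndepFun X μ)
    (hX0 : ∀ ω, X 0 ω = 1 / 2)
    (hdist : ∀ n : ℕ, 1 ≤ n →
      μ {ω | X n ω = 1} = ENNReal.ofReal (Real.exp (-1 / (n : ℝ) ^ 2)) ∧
      μ {ω | X n ω = -4 * (n : ℝ) ^ 2} =
        1 - ENNReal.ofReal (Real.exp (-1 / (n : ℝ) ^ 2)))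
    (Y : ℕ → Ω → ℝ) (hY : ∀ n ω, Y n ω = ∑ j ∈ Finset.range (n + 1), X j ω)
    (F : ℕ → MeasurableSpace Ω)
    (hF : ∀ n, F n = ⨆ j ∈ Finset.range (n + 1),
      MeasurableSpace.comap (X j) inferInstance) :
    (∀ n, Integrable (Y n) μ) ∧
      (∀ n : ℕ, ∀ᵐ ω ∂μ, (μ[Y (n + 1) | F n]) ω ≤ Y n ω - 1.52) ∧
      (∀ n : ℕ, μ {ω | ∀ m ≤ n, 0 < Y m ω} =
        ENNReal.ofReal (∏ j ∈ Finset.Icc 1 n, Real.exp (-1 / (j : ℝ) ^ 2))) ∧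
      μ {ω | ∀ n : ℕ, 0 < Y n ω} = ENNReal.ofReal (Real.exp (-(Real.pi ^ 2) / 6)) ∧
      0 < Real.exp (-(Real.pi ^ 2) / 6) := by
  have hexp_le_one : ∀ m : ℕ, Real.exp (-1 / (m : ℝ) ^ 2) ≤ 1 := fun m =>
    Real.exp_le_one_iff.mpr
      (div_nonpos_of_nonpos_of_nonneg (by norm_num) (sq_nonneg _))
  have hexp_pos : ∀ m : ℕ, (0:ℝ) < Real.exp (-1 / (m : ℝ) ^ 2) := fun m => Real.exp_pos _
  -- a.e. dichotomy
  have hdich : ∀ m : ℕ, 1 ≤ m →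
      ∀ᵐ ω ∂μ, X m ω = 1 ∨ X m ω = -4 * (m : ℝ) ^ 2 := by
    intro m hm
    obtain ⟨h1, h2⟩ := hdist m hm
    have hA : MeasurableSet {ω | X m ω = 1} :=
      (hmeas m) (measurableSet_singleton 1)
    have hB : MeasurableSet {ω | X m ω = -4 * (m : ℝ) ^ 2} :=
      (hmeas m) (measurableSet_singleton _)
    have hdisj : Disjoint {ω | X m ω = 1} {ω | X m ω = -4 * (m : ℝ) ^ 2} := by
      rw [Set.disjoint_left]
      rintro ω (h1' : X m ω = 1) (h2' : X m ω = -4 * (m : ℝ) ^ 2)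
      have hm' : (1:ℝ) ≤ (m:ℝ) := by exact_mod_cast hm
      nlinarith [h1' ▸ h2']
    have hunion : μ ({ω | X m ω = 1} ∪ {ω | X m ω = -4 * (m : ℝ) ^ 2}) = 1 := by
      rw [measure_union hdisj hB, h1, h2]
      exact add_tsub_cancel_of_le (by
        simpa using ENNReal.ofReal_le_one.2 (hexp_le_one m))
    have := prob_compl_eq_zero_iff (hA.union hB) |>.2 hunion
    have hset : {ω | ¬(X m ω = 1 ∨ X m ω = -4 * (m : ℝ) ^ 2)}
        = ({ω | X m ω = 1} ∪ {ω | X m ω = -4 * (m : ℝ) ^ 2})ᶜ := by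
      ext ω; simp [not_or]
    rw [ae_iff, hset]
    exact this
  -- integrability of each X m
  have hXint : ∀ m : ℕ, Integrable (X m) μ := by
    intro m
    rcases Nat.eq_zero_or_pos m with rfl | hm
    · have : X 0 = fun _ => (1:ℝ)/2 := funext hX0
      rw [this]; exact integrable_const _
    · refine (integrable_const (4 * (m:ℝ)^2 + 1)).mono'
        (hmeas m).aestronglyMeasurable ?_
      filter_upwards [hdich m hm] with ω hω
      have hm' : (1:ℝ) ≤ (m:ℝ) := by exact_mod_cast hm
      rcases hω with h | h <;> rw [h] <;> rw [Real.norm_eq_abs] <;> rw [abs_le] <;>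
        constructor <;> nlinarith
  -- measurability and integrability of Y
  have hYfun : ∀ n, Y n = fun ω => ∑ j ∈ Finset.range (n + 1), X j ω :=
    fun n => funext (hY n)
  have hYmeas : ∀ n, Measurable (Y n) := by
    intro n; rw [hYfun n]
    exact Finset.measurable_sum _ (fun j _ => hmeas j)
  have hYint : ∀ n, Integrable (Y n) μ := by
    intro n; rw [hYfun n]
    exact integrable_finset_sum _ (fun j _ => hXint j)
  -- the mean of X m for m ≥ 1
  have hmean : ∀ m : ℕ, 1 ≤ m → ∫ ω, X m ω ∂μ ≤ -1.52 := by
    intro m hm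
    set a := Real.exp (-1 / (m : ℝ) ^ 2) with ha_def
    have ha0 : 0 ≤ a := (hexp_pos m).le
    have ha1 : a ≤ 1 := hexp_le_one m
    have hA : MeasurableSet {ω | X m ω = 1} := (hmeas m) (measurableSet_singleton 1)
    obtain ⟨h1, h2⟩ := hdist m hm
    have hμA : (μ {ω | X m ω = 1}).toReal = a := by
      rw [h1]; exact ENNReal.toReal_ofReal ha0
    have hμAc : (μ {ω | X m ω = 1}ᶜ).toReal = 1 - a := by
      rw [measure_compl hA (measure_ne_top μ _), measure_univ,
        h1, ENNReal.toReal_sub_of_le (ENNReal.ofReal_le_one.2 ha1) ENNReal.one_ne_top,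
        ENNReal.toReal_one, ENNReal.toReal_ofReal ha0]
    have hsplit : ∫ ω, X m ω ∂μ = a + (-4 * (m:ℝ)^2) * (1 - a) := by
      rw [← integral_add_compl hA (hXint m)]
      have e1 : ∫ ω in {ω | X m ω = 1}, X m ω ∂μ = a := by
        rw [setIntegral_congr_fun hA (fun ω hω => hω), setIntegral_const, measureReal_def, hμA,
          smul_eq_mul, mul_one]
      have e2 : ∫ ω in {ω | X m ω = 1}ᶜ, X m ω ∂μ = (-4*(m:ℝ)^2) * (1 - a) := by
        have he : ∫ ω in {ω | X m ω = 1}ᶜ, X m ω ∂μ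
            = ∫ _ω in {ω | X m ω = 1}ᶜ, (-4*(m:ℝ)^2) ∂μ := by
          apply setIntegral_congr_ae hA.compl
          filter_upwards [hdich m hm] with ω hω hmem
          rcases hω with h | h
          · exact absurd h hmem
          · exact h
        rw [he, setIntegral_const, measureReal_def, hμAc, smul_eq_mul, mul_comm]
      rw [e1, e2]
    rw [hsplit]
    rcases eq_or_lt_of_le hm with hmeq | hm2
    · -- m = 1
      have hm1 : (m:ℝ) = 1 := by exact_mod_cast hmeq.symm
      have hainv : a ≤ (2.7182818283 : ℝ)⁻¹ := by
        have he : (-1 / (m:ℝ)^2) = -1 := by rw [hm1]; norm_num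
        rw [ha_def, he, Real.exp_neg]
        exact inv_anti₀ (by norm_num) Real.exp_one_gt_d9.le
      rw [hm1]; norm_num at hainv ⊢; nlinarith [hainv]
    · -- 2 ≤ m
      have hm2' : (2:ℝ) ≤ (m:ℝ) := by exact_mod_cast hm2
      set M := (m:ℝ)^2 with hM_def
      have hM4 : (4:ℝ) ≤ M := by nlinarith
      have hM0 : (0:ℝ) < M := by linarith
      have ht : -1 / M = -(1/M) := by ring
      have hupper : a * (M + 1) ≤ M := by
        have hx1 : 1 + 1/M ≤ Real.exp (1/M) := by
          have := Real.add_one_le_exp (1/M); linarith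
        have hx2 : a = (Real.exp (1/M))⁻¹ := by
          rw [ha_def, ht, Real.exp_neg]
        have hx3 : a ≤ (1 + 1/M)⁻¹ := by
          rw [hx2]
          exact inv_anti₀ (by positivity) hx1
        have hx4 : (1 + 1/M)⁻¹ = M / (M + 1) := by
          field_simp
        rw [hx4, div_eq_mul_inv] at hx3
        have := mul_le_mul_of_nonneg_right hx3 (le_of_lt (by positivity : (0:ℝ) < M + 1))
        rwa [mul_assoc, inv_mul_cancel₀ (by positivity : (M:ℝ) + 1 ≠ 0), mul_one] at this
      have hlower : 3/4 ≤ a := by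
        have hx1 := Real.add_one_le_exp (-(1/M))
        have hx2 : (1:ℝ)/M ≤ 1/4 := one_div_le_one_div_of_le (by norm_num) hM4
        rw [ha_def, ht]
        linarith
      nlinarith [hupper, hlower, hM4]
  -- the natural filtration
  have hsm : ∀ i, StronglyMeasurable (X i) := fun i => (hmeas i).stronglyMeasurable
  have hFeq : ∀ n, F n = Filtration.natural X hsm n := by
    intro n
    rw [hF n]
    simp only [Finset.mem_range_succ_iff]
    rfl
  -- conditional expectation bound
  have hcond : ∀ n : ℕ, ∀ᵐ ω ∂μ, (μ[Y (n + 1) | F n]) ω ≤ Y n ω - 1.52 := by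
    intro n
    rw [hFeq n]
    set 𝓕 := Filtration.natural X hsm with h𝓕
    have hYsm : StronglyMeasurable[𝓕 n] (Y n) := by
      rw [hYfun n]
      have : Measurable[𝓕 n] fun ω => ∑ j ∈ Finset.range (n + 1), X j ω := by
        apply Finset.measurable_sum
        intro j hj
        have hle : MeasurableSpace.comap (X j) inferInstance ≤ 𝓕 n := by
          rw [h𝓕]
          exact le_iSup₂ (f := fun k (_ : k ≤ n) =>
            MeasurableSpace.comap (X k) inferInstance) j (Finset.mem_range_succ_iff.mp hj)
        exact fun s hs => hle (X j ⁻¹' s) ⟨s, hs, rfl⟩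
      exact this.stronglyMeasurable
    have hadd : Y (n + 1) = Y n + X (n + 1) := by
      funext ω
      simp [hY, Finset.sum_range_succ]
    have hXcond : μ[X (n + 1) | 𝓕 n] =ᵐ[μ] fun _ => ∫ ω, X (n + 1) ω ∂μ :=
      hindep.condExp_natural_ae_eq_of_lt hsm (Nat.lt_succ_self n)
    have hYcond : μ[Y n | 𝓕 n] = Y n :=
      condExp_of_stronglyMeasurable (𝓕.le n) hYsm (hYint n)
    have key : μ[Y (n + 1) | 𝓕 n] =ᵐ[μ] fun ω => Y n ω + ∫ x, X (n + 1) x ∂μ := by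
      rw [hadd]
      filter_upwards [condExp_add (μ := μ) (m := 𝓕 n) (hYint n) (hXint (n + 1)),
        hXcond] with ω h1 h2
      rw [h1, Pi.add_apply, hYcond, h2]
    filter_upwards [key] with ω hω
    rw [hω]
    have := hmean (n + 1) (by omega)
    linarith
  -- sum formula when first coordinates are 1
  have hsum1 : ∀ (ω : Ω) (k : ℕ), (∀ j, 1 ≤ j → j ≤ k → X j ω = 1) →
      Y k ω = 1 / 2 + k := by
    intro ω k
    induction k with
    | zero => intro _; rw [hY]; simp [hX0 ω]
    | succ k ih =>
      intro h
      have hYk : Y k ω = 1 / 2 + k := ih (fun j hj1 hj2 => h j hj1 (by omega))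
      have hstep : Y (k + 1) ω = Y k ω + X (k + 1) ω := by
        simp [hY, Finset.sum_range_succ]
      rw [hstep, hYk, h (k + 1) (by omega) le_rfl]
      push_cast; ring
  -- part 3
  have hpart3 : ∀ n : ℕ, μ {ω | ∀ m ≤ n, 0 < Y m ω} =
      ENNReal.ofReal (∏ j ∈ Finset.Icc 1 n, Real.exp (-1 / (j : ℝ) ^ 2)) := by
    intro n
    have hgood : ∀ᵐ ω ∂μ, ∀ j ∈ Finset.Icc 1 n, X j ω = 1 ∨ X j ω = -4 * (j : ℝ) ^ 2 := by
      rw [Filter.eventually_all_finset]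
      exact fun j hj => hdich j (Finset.mem_Icc.mp hj).1
    have hae : {ω | ∀ m ≤ n, 0 < Y m ω} =ᵐ[μ] ⋂ j ∈ Finset.Icc 1 n, {ω | X j ω = 1} := by
      rw [Filter.eventuallyEq_set]
      filter_upwards [hgood] with ω hω
      simp only [Set.mem_setOf_eq, Set.mem_iInter]
      constructor
      · intro hpos
        have main : ∀ k, k ≤ n → ∀ j, 1 ≤ j → j ≤ k → X j ω = 1 := by
          intro k
          induction k with
          | zero => intro _ j _ _; omega
          | succ k ih =>
            intro hkn j hj1 hj2
            by_cases hjk : j ≤ k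
            · exact ih (le_trans (Nat.le_succ k) hkn) j hj1 hjk
            · have hj : j = k + 1 := by omega
              subst hj
              rcases hω (k + 1) (Finset.mem_Icc.mpr ⟨by omega, hkn⟩) with h | h
              · exact h
              · exfalso
                have hk : Y k ω = 1 / 2 + k :=
                  hsum1 ω k (ih (le_trans (Nat.le_succ k) hkn))
                have hY1 : Y (k + 1) ω = Y k ω + X (k + 1) ω := by
                  simp [hY, Finset.sum_range_succ]
                have hpos' := hpos (k + 1) hkn
                rw [hY1, hk, h] at hpos'
                have hkr : (0:ℝ) ≤ (k : ℝ) := Nat.cast_nonneg k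
                push_cast at hpos'
                nlinarith [hpos']
        exact fun j hj => main n le_rfl j (Finset.mem_Icc.mp hj).1 (Finset.mem_Icc.mp hj).2
      · intro h1 m hm
        have := hsum1 ω m (fun j hj1 hj2 =>
          h1 j (Finset.mem_Icc.mpr ⟨hj1, le_trans hj2 hm⟩))
        rw [this]
        positivity
    rw [measure_congr hae,
      hindep.meas_biInter (S := Finset.Icc 1 n) (s := fun j => {ω | X j ω = 1})
        (fun j _ => ⟨{1}, measurableSet_singleton 1, rfl⟩),
      ENNReal.ofReal_prod_of_nonneg (fun j _ => (hexp_pos j).le)]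
    exact Finset.prod_congr rfl (fun j hj => (hdist j (Finset.mem_Icc.mp hj).1).1)
  -- part 4
  have hpi : μ {ω | ∀ n : ℕ, 0 < Y n ω}
      = ENNReal.ofReal (Real.exp (-(Real.pi ^ 2) / 6)) := by
    set E : ℕ → Set Ω := fun n => {ω | ∀ m ≤ n, 0 < Y m ω} with hE
    have hEmeas : ∀ n, MeasurableSet (E n) := by
      intro n
      have hrw : E n = ⋂ m ∈ Set.Iic n, Y m ⁻¹' Set.Ioi 0 := by
        ext ω; simp [hE, Set.mem_iInter]
      rw [hrw]
      exact MeasurableSet.biInter (Set.to_countable _)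
        (fun m _ => (hYmeas m) measurableSet_Ioi)
    have hanti : Antitone E := fun i j hij ω hω m hm => hω m (le_trans hm hij)
    have hiInter : ⋂ n, E n = {ω | ∀ n : ℕ, 0 < Y n ω} := by
      ext ω
      simp only [Set.mem_iInter, hE, Set.mem_setOf_eq]
      exact ⟨fun h n => h n n le_rfl, fun h n m _ => h m⟩
    have htend := tendsto_measure_iInter_atTop (μ := μ)
      (fun n => (hEmeas n).nullMeasurableSet) hanti ⟨0, measure_ne_top μ _⟩
    rw [hiInter] at htend
    have hIccsum : ∀ n : ℕ, ∑ j ∈ Finset.Icc 1 n, (1 / (j:ℝ)^2)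
        = ∑ j ∈ Finset.range (n+1), 1 / (j:ℝ)^2 := by
      intro n
      induction n with
      | zero => simp
      | succ n ih => rw [Finset.sum_Icc_succ_top (by omega), Finset.sum_range_succ, ih]
    have hprodexp : ∀ n : ℕ, ∏ j ∈ Finset.Icc 1 n, Real.exp (-1 / (j:ℝ)^2)
        = Real.exp (-(∑ j ∈ Finset.range (n+1), 1 / (j:ℝ)^2)) := by
      intro n
      rw [← Real.exp_sum, ← hIccsum n, ← Finset.sum_neg_distrib]
      congr 1
      exact Finset.sum_congr rfl (fun j _ => by ring)
    have hS : Filter.Tendsto (fun n : ℕ => ∑ j ∈ Finset.range (n+1), 1 / (j:ℝ)^2)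
        Filter.atTop (nhds (Real.pi ^ 2 / 6)) :=
      hasSum_zeta_two.tendsto_sum_nat.comp (Filter.tendsto_add_atTop_nat 1)
    have htend2 : Filter.Tendsto (μ ∘ E) Filter.atTop
        (nhds (ENNReal.ofReal (Real.exp (-(Real.pi ^ 2) / 6)))) := by
      have heq : (μ ∘ E) = fun n : ℕ =>
          ENNReal.ofReal (Real.exp (-(∑ j ∈ Finset.range (n+1), 1 / (j:ℝ)^2))) := by
        funext n
        simp only [Function.comp_apply, hE]
        rw [hpart3 n, hprodexp n]
      rw [heq]
      have : (-(Real.pi ^ 2) / 6) = -(Real.pi ^ 2 / 6) := by ring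
      rw [this]
      exact (ENNReal.continuous_ofReal.tendsto _).comp
        ((Real.continuous_exp.tendsto _).comp hS.neg)
    exact tendsto_nhds_unique htend htend2
  exact ⟨hYint, hcond, hpart3, hpi, Real.exp_pos _⟩
end

section
/- Let {Y_n}_{n∈ℕ} be i.i.d. random variables with P(Y_n = 1) = P(Y_n = −1) = 1/2. Fix an integer x₀ ≥ 1 and define the integer-valued process X_0 = x₀ and X_{n+1} = X_n + Y_{n+1}·⌊√X_n⌋ if X_n ≥ 1, and X_{n+1} = X_n otherwise (⌊√·⌋ is the integer square root). Let T := min{n : X_n ≤ 0} (min ∅ := ∞). Then P(T < ∞) = 1 and P(T ≥ k) ∈ O(k^{−1/6}), i.e., there exist C > 0 and K ∈ ℕ with P(T ≥ k) ≤ C·k^{−1/6} for all k ≥ K. -/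
open MeasureTheory ProbabilityTheory

namespace SqrtWalkAux

/-! Auxiliary stopped/capped process for the sqrt-increment walk. -/

lemma int_sqrt_le_self {z : ℤ} (hz : 0 ≤ z) : Int.sqrt z ≤ z := by
  have h : Nat.sqrt z.toNat ≤ z.toNat := Nat.sqrt_le_self _
  unfold Int.sqrt
  omega

lemma one_le_int_sqrt {z : ℤ} (hz : 1 ≤ z) : 1 ≤ Int.sqrt z := by
  have h : 1 ≤ Nat.sqrt z.toNat := Nat.le_sqrt.mpr (by omega)
  unfold Int.sqrt
  omega

variable {Ω : Type*}

/-- The walk stopped on leaving `[1, a)`. -/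
def Z (Y : ℕ → Ω → ℤ) (x₀ a : ℤ) : ℕ → Ω → ℤ
  | 0 => fun _ => x₀
  | n + 1 => fun ω =>
      if 1 ≤ Z Y x₀ a n ω ∧ Z Y x₀ a n ω < a then
        Z Y x₀ a n ω + Y (n + 1) ω * Int.sqrt (Z Y x₀ a n ω)
      else Z Y x₀ a n ω

lemma Z_zero (Y : ℕ → Ω → ℤ) (x₀ a : ℤ) (ω : Ω) : Z Y x₀ a 0 ω = x₀ := rfl

lemma Z_succ (Y : ℕ → Ω → ℤ) (x₀ a : ℤ) (n : ℕ) (ω : Ω) :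
    Z Y x₀ a (n + 1) ω =
      if 1 ≤ Z Y x₀ a n ω ∧ Z Y x₀ a n ω < a then
        Z Y x₀ a n ω + Y (n + 1) ω * Int.sqrt (Z Y x₀ a n ω)
      else Z Y x₀ a n ω := rfl

/-- One-step increment in the live region. -/
noncomputable def Wf (a : ℤ) (z : ℤ) : ℝ :=
  if 1 ≤ z ∧ z < a then ((Int.sqrt z : ℤ) : ℝ) else 0

variable {m0 : MeasurableSpace Ω}

lemma measurable_Z {Y : ℕ → Ω → ℤ} (hmeas : ∀ n, Measurable (Y n)) (x₀ a : ℤ) :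
    ∀ n, Measurable (Z Y x₀ a n) := by
  intro n
  induction n with
  | zero => exact measurable_const
  | succ n ih =>
      have : Z Y x₀ a (n + 1) = fun ω =>
          (fun p : ℤ × ℤ =>
            if 1 ≤ p.1 ∧ p.1 < a then p.1 + p.2 * Int.sqrt p.1 else p.1)
            (Z Y x₀ a n ω, Y (n + 1) ω) := rfl
      rw [this]
      exact (measurable_of_countable (fun p : ℤ × ℤ =>
        if 1 ≤ p.1 ∧ p.1 < a then p.1 + p.2 * Int.sqrt p.1 else p.1)).comp
        (ih.prodMk (hmeas (n + 1)))

lemma Z_factor (Y : ℕ → Ω → ℤ) (x₀ a : ℤ) :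
    ∀ n, ∃ g : ({i // i ∈ Finset.range (n + 1)} → ℤ) → ℤ,
      ∀ ω, Z Y x₀ a n ω = g (fun i => Y i ω) := by
  intro n
  induction n with
  | zero => exact ⟨fun _ => x₀, fun ω => rfl⟩
  | succ n ih =>
      obtain ⟨g, hg⟩ := ih
      refine ⟨fun v =>
        (fun z y : ℤ => if 1 ≤ z ∧ z < a then z + y * Int.sqrt z else z)
          (g (fun i => v ⟨i.1, Finset.mem_range.mpr
              (Nat.lt_succ_of_lt (Finset.mem_range.mp i.2))⟩))
          (v ⟨n + 1, Finset.mem_range.mpr (Nat.lt_succ_self _)⟩),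
        fun ω => ?_⟩
      rw [Z_succ, hg ω]

lemma Z_indep {μ : Measure Ω} {Y : ℕ → Ω → ℤ} (hmeas : ∀ n, Measurable (Y n))
    (hindep : iIndepFun Y μ) (x₀ a : ℤ) (n : ℕ) (φ ψ : ℤ → ℝ) :
    IndepFun (fun ω => φ (Z Y x₀ a n ω)) (fun ω => ψ (Y (n + 1) ω)) μ := by
  obtain ⟨g, hg⟩ := Z_factor Y x₀ a n
  have hdisj : Disjoint (Finset.range (n + 1)) ({n + 1} : Finset ℕ) := by simp
  have h0 := hindep.indepFun_finset (Finset.range (n + 1)) {n + 1} hdisj hmeas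
  have h1 := h0.comp
    (measurable_of_countable (fun v : ({i // i ∈ Finset.range (n + 1)} → ℤ) => φ (g v)))
    (measurable_of_countable
      (fun v : ({i // i ∈ ({n + 1} : Finset ℕ)} → ℤ) =>
        ψ (v ⟨n + 1, Finset.mem_singleton_self _⟩)))
  have e1 : (fun ω => φ (Z Y x₀ a n ω)) =
      (fun v : ({i // i ∈ Finset.range (n + 1)} → ℤ) => φ (g v)) ∘
        (fun ω (i : (Finset.range (n + 1) : Finset ℕ)) => Y i ω) :=
    funext fun ω => by simp [Function.comp, hg ω]
  have e2 : (fun ω => ψ (Y (n + 1) ω)) =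
      (fun v : ({i // i ∈ ({n + 1} : Finset ℕ)} → ℤ) =>
        ψ (v ⟨n + 1, Finset.mem_singleton_self _⟩)) ∘
        (fun ω (i : (({n + 1} : Finset ℕ) : Finset ℕ)) => Y i ω) := rfl
  rw [e1, e2]
  exact h1

variable {μ : Measure Ω} [IsProbabilityMeasure μ]

lemma Y_ae {Y : ℕ → Ω → ℤ} (hmeas : ∀ n, Measurable (Y n))
    (hdist : ∀ n, μ {ω | Y n ω = 1} = 1 / 2 ∧ μ {ω | Y n ω = -1} = 1 / 2) (n : ℕ) :
    ∀ᵐ ω ∂μ, Y n ω = 1 ∨ Y n ω = -1 := by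
  have hA : MeasurableSet {ω | Y n ω = 1} := hmeas n (MeasurableSet.singleton 1)
  have hB : MeasurableSet {ω | Y n ω = -1} := hmeas n (MeasurableSet.singleton (-1))
  have hd : Disjoint {ω | Y n ω = 1} {ω | Y n ω = -1} := by
    rw [Set.disjoint_left]
    intro ω h1 h2
    simp only [Set.mem_setOf_eq] at h1 h2
    omega
  have hu : μ ({ω | Y n ω = 1} ∪ {ω | Y n ω = -1}) = 1 := by
    rw [measure_union hd hB, (hdist n).1, (hdist n).2]
    exact ENNReal.add_halves 1
  have hc : μ ({ω | Y n ω = 1} ∪ {ω | Y n ω = -1})ᶜ = 0 := by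
    rw [measure_compl (hA.union hB) (measure_ne_top μ _), hu, measure_univ, tsub_self]
  exact mem_ae_iff.mpr hc

lemma Y_integral {Y : ℕ → Ω → ℤ} (hmeas : ∀ n, Measurable (Y n))
    (hdist : ∀ n, μ {ω | Y n ω = 1} = 1 / 2 ∧ μ {ω | Y n ω = -1} = 1 / 2) (n : ℕ) :
    ∫ ω, ((Y n ω : ℤ) : ℝ) ∂μ = 0 := by
  have hA : MeasurableSet {ω | Y n ω = 1} := hmeas n (MeasurableSet.singleton 1)
  have hB : MeasurableSet {ω | Y n ω = -1} := hmeas n (MeasurableSet.singleton (-1))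
  have hae : (fun ω => ((Y n ω : ℤ) : ℝ)) =ᵐ[μ]
      fun ω => Set.indicator {ω | Y n ω = 1} (fun _ => (1 : ℝ)) ω +
        Set.indicator {ω | Y n ω = -1} (fun _ => (-1 : ℝ)) ω := by
    filter_upwards [Y_ae hmeas hdist n] with ω hω
    rcases hω with h | h
    · have h1 : ω ∈ {ω | Y n ω = 1} := h
      have h2 : ω ∉ {ω | Y n ω = -1} := by simp only [Set.mem_setOf_eq, h]; omega
      simp [Set.indicator_of_mem h1, Set.indicator_of_notMem h2, h]
    · have h1 : ω ∉ {ω | Y n ω = 1} := by simp only [Set.mem_setOf_eq, h]; omega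
      have h2 : ω ∈ {ω | Y n ω = -1} := h
      simp [Set.indicator_of_mem h2, Set.indicator_of_notMem h1, h]
  rw [integral_congr_ae hae,
    integral_add ((integrable_const (1 : ℝ)).indicator hA)
      ((integrable_const (-1 : ℝ)).indicator hB),
    integral_indicator_const _ hA, integral_indicator_const _ hB,
    measureReal_def, measureReal_def, (hdist n).1, (hdist n).2]
  norm_num

lemma Z_bdd {Y : ℕ → Ω → ℤ} {x₀ a : ℤ} (hx₀ : 1 ≤ x₀) (ha : 1 ≤ a) (ω : Ω)
    (hω : ∀ n, Y n ω = 1 ∨ Y n ω = -1) :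
    ∀ n, 0 ≤ Z Y x₀ a n ω ∧ Z Y x₀ a n ω ≤ x₀ + 2 * a := by
  intro n
  induction n with
  | zero => rw [Z_zero]; omega
  | succ n ih =>
      rw [Z_succ]
      by_cases hc : 1 ≤ Z Y x₀ a n ω ∧ Z Y x₀ a n ω < a
      · rw [if_pos hc]
        have hs1 : 1 ≤ Int.sqrt (Z Y x₀ a n ω) := one_le_int_sqrt hc.1
        have hs2 : Int.sqrt (Z Y x₀ a n ω) ≤ Z Y x₀ a n ω := int_sqrt_le_self (by omega)
        rcases hω (n + 1) with h | h <;>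
          simp only [h, one_mul, neg_one_mul] <;> omega
      · rw [if_neg hc]; exact ih

end SqrtWalkAux

open SqrtWalkAux

section Key

variable {Ω : Type*} {m0 : MeasurableSpace Ω}

set_option maxHeartbeats 1000000 in
/-- Key quantitative bound. -/
lemma sqrt_walk_key (μ : Measure Ω) [IsProbabilityMeasure μ]
    (Y : ℕ → Ω → ℤ) (hmeas : ∀ n, Measurable (Y n))
    (hindep : iIndepFun Y μ)
    (hdist : ∀ n, μ {ω | Y n ω = 1} = 1 / 2 ∧ μ {ω | Y n ω = -1} = 1 / 2)
    (x₀ : ℤ) (hx₀ : 1 ≤ x₀)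
    (X : ℕ → Ω → ℤ) (hX0 : ∀ ω, X 0 ω = x₀)
    (hXrec : ∀ n ω, X (n + 1) ω =
      if 1 ≤ X n ω then X n ω + Y (n + 1) ω * Int.sqrt (X n ω) else X n ω)
    (a : ℤ) (ha : 1 ≤ a) (k : ℕ) (hk : 1 ≤ k) :
    (μ {ω | ∀ n < k, 0 < X n ω}).toReal ≤
      ((x₀ : ℝ) + 2 * (a : ℝ)) ^ 2 / k + (x₀ : ℝ) / (a : ℝ) := by
  classical
  set M : ℝ := (x₀ : ℝ) + 2 * (a : ℝ) with hMdef
  have hx₀R : (1 : ℝ) ≤ (x₀ : ℝ) := by exact_mod_cast hx₀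
  have haR : (1 : ℝ) ≤ (a : ℝ) := by exact_mod_cast ha
  have hM1 : (1 : ℝ) ≤ M := by rw [hMdef]; nlinarith
  -- a.e. boundedness
  have hGae : ∀ᵐ ω ∂μ, ∀ n, Y n ω = 1 ∨ Y n ω = -1 :=
    ae_all_iff.mpr fun n => Y_ae hmeas hdist n
  have hZb : ∀ᵐ ω ∂μ, ∀ n, 0 ≤ Z Y x₀ a n ω ∧ Z Y x₀ a n ω ≤ x₀ + 2 * a := by
    filter_upwards [hGae] with ω h using Z_bdd hx₀ ha ω h
  have hZRb : ∀ n, ∀ᵐ ω ∂μ, |((Z Y x₀ a n ω : ℤ) : ℝ)| ≤ M := by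
    intro n
    filter_upwards [hZb] with ω h
    have h1 := (h n).1
    have h2 := (h n).2
    have h1R : (0 : ℝ) ≤ ((Z Y x₀ a n ω : ℤ) : ℝ) := by exact_mod_cast h1
    have h2R : ((Z Y x₀ a n ω : ℤ) : ℝ) ≤ M := by rw [hMdef]; exact_mod_cast h2
    rw [abs_le]
    constructor <;> linarith
  have hYb : ∀ n, ∀ᵐ ω ∂μ, |((Y n ω : ℤ) : ℝ)| ≤ 1 := by
    intro n
    filter_upwards [Y_ae hmeas hdist n] with ω h
    rcases h with h | h <;> simp [h]
  -- measurability of real casts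
  have hZRm : ∀ n, Measurable fun ω => ((Z Y x₀ a n ω : ℤ) : ℝ) := fun n =>
    (measurable_of_countable (fun z : ℤ => ((z : ℤ) : ℝ))).comp (measurable_Z hmeas x₀ a n)
  have hYRm : ∀ n, Measurable fun ω => ((Y n ω : ℤ) : ℝ) := fun n =>
    (measurable_of_countable (fun z : ℤ => ((z : ℤ) : ℝ))).comp (hmeas n)
  have hWm : ∀ n, Measurable fun ω => Wf a (Z Y x₀ a n ω) := fun n =>
    (measurable_of_countable (fun z : ℤ => Wf a z)).comp (measurable_Z hmeas x₀ a n)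
  -- integrability from a.e. bounds
  have hInt : ∀ (f : Ω → ℝ) (C : ℝ), Measurable f → (∀ᵐ ω ∂μ, |f ω| ≤ C) →
      Integrable f μ := by
    intro f C hm hb
    refine ⟨hm.aestronglyMeasurable, HasFiniteIntegral.of_bounded (C := C) ?_⟩
    filter_upwards [hb] with ω h using by simpa [Real.norm_eq_abs] using h
  have hWb : ∀ z : ℤ, |Wf a z| ≤ (a : ℝ) := by
    intro z
    unfold Wf
    split_ifs with h
    · have h1 : (0 : ℤ) ≤ Int.sqrt z := Int.sqrt_nonneg z
      have h2 : Int.sqrt z ≤ a := le_trans (int_sqrt_le_self (by omega)) (le_of_lt h.2)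
      rw [abs_le]
      constructor
      · have : (0 : ℝ) ≤ ((Int.sqrt z : ℤ) : ℝ) := by exact_mod_cast h1
        linarith
      · exact_mod_cast h2
    · simpa using le_trans zero_le_one haR
  have hIZ : ∀ n, Integrable (fun ω => ((Z Y x₀ a n ω : ℤ) : ℝ)) μ := fun n =>
    hInt _ M (hZRm n) (hZRb n)
  have hIW : ∀ n, Integrable (fun ω => Wf a (Z Y x₀ a n ω)) μ := fun n =>
    hInt _ (a : ℝ) (hWm n) (Filter.Eventually.of_forall fun ω => hWb _)
  have hIY : ∀ n, Integrable (fun ω => ((Y n ω : ℤ) : ℝ)) μ := fun n =>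
    hInt _ 1 (hYRm n) (hYb n)
  -- martingale property : E[Z n] = x₀
  have hEZ : ∀ n, ∫ ω, ((Z Y x₀ a n ω : ℤ) : ℝ) ∂μ = (x₀ : ℝ) := by
    intro n
    induction n with
    | zero => simp [Z_zero]
    | succ n ih =>
        have hid : (fun ω => ((Z Y x₀ a (n + 1) ω : ℤ) : ℝ)) = fun ω =>
            ((Z Y x₀ a n ω : ℤ) : ℝ) + Wf a (Z Y x₀ a n ω) * ((Y (n + 1) ω : ℤ) : ℝ) := by
          funext ω
          rw [Z_succ]
          unfold Wf
          by_cases hc : 1 ≤ Z Y x₀ a n ω ∧ Z Y x₀ a n ω < a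
          · rw [if_pos hc, if_pos hc]; push_cast; ring
          · rw [if_neg hc, if_neg hc]; simp
        have hIWY : Integrable (fun ω => Wf a (Z Y x₀ a n ω) * ((Y (n + 1) ω : ℤ) : ℝ)) μ := by
          refine hInt _ ((a : ℝ) * 1) ((hWm n).mul (hYRm (n + 1))) ?_
          filter_upwards [hYb (n + 1)] with ω h
          rw [abs_mul]
          exact mul_le_mul (hWb _) h (abs_nonneg _) (by linarith)
        have hzero : ∫ ω, Wf a (Z Y x₀ a n ω) * ((Y (n + 1) ω : ℤ) : ℝ) ∂μ = 0 := by
          have hind := Z_indep hmeas hindep x₀ a n (Wf a) (fun y => ((y : ℤ) : ℝ))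
          have := hind.integral_fun_mul_eq_mul_integral (hIW n).aestronglyMeasurable
            (hIY (n + 1)).aestronglyMeasurable
          rw [this, Y_integral hmeas hdist (n + 1), mul_zero]
        rw [hid, integral_add (hIZ n) hIWY, ih, hzero, add_zero]
  -- second moment recursion
  have hIZ2 : ∀ n, Integrable (fun ω => ((Z Y x₀ a n ω : ℤ) : ℝ) ^ 2) μ := by
    intro n
    refine hInt _ (M ^ 2) ((hZRm n).pow_const 2) ?_
    filter_upwards [hZRb n] with ω h
    rw [abs_pow]
    exact pow_le_pow_left₀ (abs_nonneg _) h 2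
  have hEZ2 : ∀ n, ∫ ω, ((Z Y x₀ a n ω : ℤ) : ℝ) ^ 2 ∂μ =
      (x₀ : ℝ) ^ 2 + ∑ m ∈ Finset.range n, ∫ ω, (Wf a (Z Y x₀ a m ω)) ^ 2 ∂μ := by
    intro n
    induction n with
    | zero => simp [Z_zero]
    | succ n ih =>
        have hid : (fun ω => ((Z Y x₀ a (n + 1) ω : ℤ) : ℝ) ^ 2) = fun ω =>
            ((Z Y x₀ a n ω : ℤ) : ℝ) ^ 2 +
            (2 * ((Z Y x₀ a n ω : ℤ) : ℝ) * Wf a (Z Y x₀ a n ω)) * ((Y (n + 1) ω : ℤ) : ℝ) +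
            (Wf a (Z Y x₀ a n ω)) ^ 2 * ((Y (n + 1) ω : ℤ) : ℝ) ^ 2 := by
          funext ω
          rw [Z_succ]
          unfold Wf
          by_cases hc : 1 ≤ Z Y x₀ a n ω ∧ Z Y x₀ a n ω < a
          · rw [if_pos hc, if_pos hc]; push_cast; ring
          · rw [if_neg hc, if_neg hc]; simp
        have hcm : Measurable fun ω =>
            2 * ((Z Y x₀ a n ω : ℤ) : ℝ) * Wf a (Z Y x₀ a n ω) :=
          (measurable_of_countable
            (fun z : ℤ => 2 * ((z : ℤ) : ℝ) * Wf a z)).comp (measurable_Z hmeas x₀ a n)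
        have hI2 : Integrable (fun ω =>
            (2 * ((Z Y x₀ a n ω : ℤ) : ℝ) * Wf a (Z Y x₀ a n ω)) *
              ((Y (n + 1) ω : ℤ) : ℝ)) μ := by
          refine hInt _ (2 * M * (a : ℝ) * 1) (hcm.mul (hYRm (n + 1))) ?_
          filter_upwards [hZRb n, hYb (n + 1)] with ω h1 h2
          rw [abs_mul]
          have s0 : |2 * ((Z Y x₀ a n ω : ℤ) : ℝ) * Wf a (Z Y x₀ a n ω)| ≤ 2 * M * (a : ℝ) := by
            rw [abs_mul, abs_mul, abs_two]
            have e2 := hWb (Z Y x₀ a n ω)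
            have p1 := abs_nonneg (((Z Y x₀ a n ω : ℤ) : ℝ))
            have p2 := abs_nonneg (Wf a (Z Y x₀ a n ω))
            nlinarith [mul_le_mul h1 e2 p2 (le_trans p1 h1)]
          exact mul_le_mul s0 h2 (abs_nonneg _) (by nlinarith)
        have hI3 : Integrable (fun ω =>
            (Wf a (Z Y x₀ a n ω)) ^ 2 * ((Y (n + 1) ω : ℤ) : ℝ) ^ 2) μ := by
          refine hInt _ ((a : ℝ) ^ 2 * 1) (((hWm n).pow_const 2).mul
            ((hYRm (n + 1)).pow_const 2)) ?_
          filter_upwards [hYb (n + 1)] with ω h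
          rw [abs_mul, abs_pow, abs_pow]
          have e2 := hWb (Z Y x₀ a n ω)
          have p2 := abs_nonneg (Wf a (Z Y x₀ a n ω))
          have p3 := abs_nonneg (((Y (n + 1) ω : ℤ) : ℝ))
          have t1 : |Wf a (Z Y x₀ a n ω)| ^ 2 ≤ (a : ℝ) ^ 2 := by nlinarith
          have t2 : |((Y (n + 1) ω : ℤ) : ℝ)| ^ 2 ≤ 1 := by nlinarith
          nlinarith [sq_nonneg (|Wf a (Z Y x₀ a n ω)|), sq_nonneg (|((Y (n + 1) ω : ℤ) : ℝ)|)]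
        have hzero2 : ∫ ω, (2 * ((Z Y x₀ a n ω : ℤ) : ℝ) * Wf a (Z Y x₀ a n ω)) *
            ((Y (n + 1) ω : ℤ) : ℝ) ∂μ = 0 := by
          have hind := Z_indep hmeas hindep x₀ a n
            (fun z => 2 * ((z : ℤ) : ℝ) * Wf a z) (fun y => ((y : ℤ) : ℝ))
          have := hind.integral_fun_mul_eq_mul_integral (hInt _ (2 * M * (a : ℝ))
            hcm (by
              filter_upwards [hZRb n] with ω h1
              rw [abs_mul, abs_mul, abs_two]
              have e2 := hWb (Z Y x₀ a n ω)
              have p1 := abs_nonneg (((Z Y x₀ a n ω : ℤ) : ℝ))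
              have p2 := abs_nonneg (Wf a (Z Y x₀ a n ω))
              nlinarith [mul_le_mul h1 e2 p2 (le_trans p1 h1)])).aestronglyMeasurable
            (hIY (n + 1)).aestronglyMeasurable
          rw [this, Y_integral hmeas hdist (n + 1), mul_zero]
        have hYsq : (fun ω => (Wf a (Z Y x₀ a n ω)) ^ 2 * ((Y (n + 1) ω : ℤ) : ℝ) ^ 2)
            =ᵐ[μ] fun ω => (Wf a (Z Y x₀ a n ω)) ^ 2 := by
          filter_upwards [Y_ae hmeas hdist (n + 1)] with ω h
          rcases h with h | h <;> simp [h]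
        have hf12 : Integrable (fun ω => ((Z Y x₀ a n ω : ℤ) : ℝ) ^ 2 +
            (2 * ((Z Y x₀ a n ω : ℤ) : ℝ) * Wf a (Z Y x₀ a n ω)) *
              ((Y (n + 1) ω : ℤ) : ℝ)) μ := (hIZ2 n).add hI2
        rw [hid]
        rw [integral_add hf12 hI3]
        rw [integral_add (hIZ2 n) hI2]
        rw [hzero2, add_zero]
        rw [integral_congr_ae hYsq]
        rw [ih, Finset.sum_range_succ]
        ring
  -- the two bad-event sets
  set Bset : Set Ω := {ω | ∀ n < k, 1 ≤ Z Y x₀ a n ω ∧ Z Y x₀ a n ω < a} with hBdef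
  set Cset : Set Ω := {ω | a ≤ Z Y x₀ a (k - 1) ω} with hCdef
  -- bound on μ Bset
  have hBmeas : ∀ n, MeasurableSet {ω | 1 ≤ Z Y x₀ a n ω ∧ Z Y x₀ a n ω < a} := by
    intro n
    exact (measurable_Z hmeas x₀ a n) (show MeasurableSet {z : ℤ | 1 ≤ z ∧ z < a} from trivial)
  have hWsq_ge : ∀ n < k, (μ Bset).toReal ≤ ∫ ω, (Wf a (Z Y x₀ a n ω)) ^ 2 ∂μ := by
    intro n hn
    have hsub : Bset ⊆ {ω | 1 ≤ Z Y x₀ a n ω ∧ Z Y x₀ a n ω < a} := fun ω hω => hω n hn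
    have h1 : (μ Bset).toReal ≤ (μ {ω | 1 ≤ Z Y x₀ a n ω ∧ Z Y x₀ a n ω < a}).toReal :=
      ENNReal.toReal_mono (measure_ne_top μ _) (measure_mono hsub)
    refine le_trans h1 ?_
    have hind : ∫ ω, Set.indicator {ω | 1 ≤ Z Y x₀ a n ω ∧ Z Y x₀ a n ω < a}
        (fun _ => (1 : ℝ)) ω ∂μ =
        (μ {ω | 1 ≤ Z Y x₀ a n ω ∧ Z Y x₀ a n ω < a}).toReal := by
      rw [integral_indicator_const _ (hBmeas n)]; simp [measureReal_def]
    rw [← hind]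
    refine integral_mono ((integrable_const (1 : ℝ)).indicator (hBmeas n))
      (by
        refine hInt _ ((a : ℝ) ^ 2) ((hWm n).pow_const 2) ?_
        refine Filter.Eventually.of_forall fun ω => ?_
        rw [abs_pow]
        have := hWb (Z Y x₀ a n ω)
        have h3 := abs_nonneg (Wf a (Z Y x₀ a n ω))
        nlinarith) ?_
    intro ω
    beta_reduce
    by_cases hω : ω ∈ {ω | 1 ≤ Z Y x₀ a n ω ∧ Z Y x₀ a n ω < a}
    · rw [Set.indicator_of_mem hω]
      have hω' : 1 ≤ Z Y x₀ a n ω ∧ Z Y x₀ a n ω < a := hω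
      have h1 : (1 : ℤ) ≤ Int.sqrt (Z Y x₀ a n ω) := one_le_int_sqrt hω'.1
      have h2 : Wf a (Z Y x₀ a n ω) = ((Int.sqrt (Z Y x₀ a n ω) : ℤ) : ℝ) := by
        unfold Wf; rw [if_pos hω']
      rw [h2]
      have : (1 : ℝ) ≤ ((Int.sqrt (Z Y x₀ a n ω) : ℤ) : ℝ) := by exact_mod_cast h1
      nlinarith
    · rw [Set.indicator_of_notMem hω]
      positivity
  have hZ2upper : ∫ ω, ((Z Y x₀ a k ω : ℤ) : ℝ) ^ 2 ∂μ ≤ M ^ 2 := by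
    have : ∫ ω, ((Z Y x₀ a k ω : ℤ) : ℝ) ^ 2 ∂μ ≤ ∫ _ω, M ^ 2 ∂μ := by
      refine integral_mono_ae (hIZ2 k) (integrable_const _) ?_
      filter_upwards [hZRb k] with ω h
      calc ((Z Y x₀ a k ω : ℤ) : ℝ) ^ 2 ≤ |((Z Y x₀ a k ω : ℤ) : ℝ)| ^ 2 := by
            rw [sq_abs]
        _ ≤ M ^ 2 := pow_le_pow_left₀ (abs_nonneg _) h 2
    simpa using this
  have hBbound : (μ Bset).toReal ≤ M ^ 2 / k := by
    have hsum : (k : ℝ) * (μ Bset).toReal ≤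
        ∑ m ∈ Finset.range k, ∫ ω, (Wf a (Z Y x₀ a m ω)) ^ 2 ∂μ := by
      calc (k : ℝ) * (μ Bset).toReal
          = ∑ _m ∈ Finset.range k, (μ Bset).toReal := by
            rw [Finset.sum_const, Finset.card_range, nsmul_eq_mul]
        _ ≤ ∑ m ∈ Finset.range k, ∫ ω, (Wf a (Z Y x₀ a m ω)) ^ 2 ∂μ :=
            Finset.sum_le_sum fun m hm => hWsq_ge m (Finset.mem_range.mp hm)
    have h2 : (k : ℝ) * (μ Bset).toReal ≤ M ^ 2 := by
      have := hEZ2 k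
      have hx2 : (0 : ℝ) ≤ (x₀ : ℝ) ^ 2 := sq_nonneg _
      nlinarith [hZ2upper]
    have hkpos : (0 : ℝ) < (k : ℝ) := by exact_mod_cast hk
    rw [le_div_iff₀ hkpos]
    linarith [h2]
  -- Markov bound on μ Cset
  have hCmeas : MeasurableSet Cset :=
    (measurable_Z hmeas x₀ a (k - 1)) (show MeasurableSet {z : ℤ | a ≤ z} from trivial)
  have hCbound : (μ Cset).toReal ≤ (x₀ : ℝ) / (a : ℝ) := by
    have hle : ∀ᵐ ω ∂μ, Set.indicator Cset (fun _ => (a : ℝ)) ω ≤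
        ((Z Y x₀ a (k - 1) ω : ℤ) : ℝ) := by
      filter_upwards [hZb] with ω h
      by_cases hω : ω ∈ Cset
      · rw [Set.indicator_of_mem hω]
        have : a ≤ Z Y x₀ a (k - 1) ω := hω
        exact_mod_cast this
      · rw [Set.indicator_of_notMem hω]
        have := (h (k - 1)).1
        exact_mod_cast this
    have hint : ∫ ω, Set.indicator Cset (fun _ => (a : ℝ)) ω ∂μ =
        (μ Cset).toReal * (a : ℝ) := by
      rw [integral_indicator_const _ hCmeas]; rw [smul_eq_mul, measureReal_def]
    have h1 : (μ Cset).toReal * (a : ℝ) ≤ (x₀ : ℝ) := by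
      rw [← hint, ← hEZ (k - 1)]
      exact integral_mono_ae ((integrable_const ((a : ℝ))).indicator hCmeas) (hIZ (k - 1)) hle
    have hapos : (0 : ℝ) < (a : ℝ) := by linarith
    rw [le_div_iff₀ hapos]
    exact h1
  -- inclusion of the target event
  have hincl : {ω | ∀ n < k, 0 < X n ω} ⊆ Bset ∪ Cset := by
    intro ω hω
    simp only [Set.mem_setOf_eq] at hω
    by_cases hcase : ∀ n < k, X n ω < a
    · left
      have hZX : ∀ n, n < k → Z Y x₀ a n ω = X n ω := by
        intro n
        induction n with
        | zero => intro _; rw [Z_zero, hX0]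
        | succ n ih =>
            intro hn
            have hn' : n < k := Nat.lt_of_succ_lt hn
            have h1 : 1 ≤ X n ω := by have := hω n hn'; omega
            have h2 : X n ω < a := hcase n hn'
            rw [Z_succ, ih hn', if_pos ⟨h1, h2⟩, hXrec, if_pos h1]
      intro n hn
      rw [hZX n hn]
      exact ⟨by have := hω n hn; omega, hcase n hn⟩
    · right
      push_neg at hcase
      have hP : ∃ n, n < k ∧ a ≤ X n ω := by
        obtain ⟨n, hn, hna⟩ := hcase
        exact ⟨n, hn, hna⟩
      set n₀ := Nat.find hP with hn₀def
      have hspec := Nat.find_spec hP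
      have hmin : ∀ m < n₀, ¬(m < k ∧ a ≤ X m ω) := fun m hm => Nat.find_min hP hm
      have hZX : ∀ m, m ≤ n₀ → Z Y x₀ a m ω = X m ω := by
        intro m
        induction m with
        | zero => intro _; rw [Z_zero, hX0]
        | succ m ih =>
            intro hm
            have hm' : m < n₀ := Nat.lt_of_succ_le hm
            have hmk : m < k := lt_trans hm' hspec.1
            have h1 : 1 ≤ X m ω := by have := hω m hmk; omega
            have h2 : X m ω < a := by
              have := hmin m hm'
              omega
            rw [Z_succ, ih (le_of_lt hm'), if_pos ⟨h1, h2⟩, hXrec, if_pos h1]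
      have hZn₀ : a ≤ Z Y x₀ a n₀ ω := by
        rw [hZX n₀ le_rfl]; exact hspec.2
      have hfreeze : ∀ j, Z Y x₀ a (n₀ + j) ω = Z Y x₀ a n₀ ω := by
        intro j
        induction j with
        | zero => rfl
        | succ j ih =>
            have : n₀ + (j + 1) = (n₀ + j) + 1 := rfl
            rw [this, Z_succ, ih, if_neg]
            intro h
            omega
      have hk1 : n₀ ≤ k - 1 := by omega
      have : k - 1 = n₀ + (k - 1 - n₀) := by omega
      show a ≤ Z Y x₀ a (k - 1) ω
      rw [this, hfreeze]
      exact hZn₀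
  -- combine
  have hfinal : (μ {ω | ∀ n < k, 0 < X n ω}).toReal ≤
      (μ Bset).toReal + (μ Cset).toReal := by
    have h1 : μ {ω | ∀ n < k, 0 < X n ω} ≤ μ Bset + μ Cset :=
      le_trans (measure_mono hincl) (measure_union_le _ _)
    have h2 := ENNReal.toReal_mono
      (by simp [ENNReal.add_ne_top, measure_ne_top]) h1
    rwa [ENNReal.toReal_add (measure_ne_top μ _) (measure_ne_top μ _)] at h2
  calc (μ {ω | ∀ n < k, 0 < X n ω}).toReal
      ≤ (μ Bset).toReal + (μ Cset).toReal := hfinal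
    _ ≤ M ^ 2 / k + (x₀ : ℝ) / (a : ℝ) := add_le_add hBbound hCbound

end Key

open MeasureTheory ProbabilityTheory

set_option maxHeartbeats 1000000 in
/-- **Almost-sure termination with `O(k^{−1/6})` tail for the loop
`while x ≥ 1 do x := x + r·⌊√x⌋ od` with fair `±1` sampling.**
`T = min {n | X n ≤ 0}`; `P(T < ∞) = μ {ω | ∃ n, X n ω ≤ 0}` and
`P(T ≥ k) = μ {ω | ∀ n < k, 0 < X n ω}`. -/
theorem sqrt_increment_walk_termination
    {Ω : Type*} {m0 : MeasurableSpace Ω} (μ : Measure Ω) [IsProbabilityMeasure μ]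
    (Y : ℕ → Ω → ℤ) (hmeas : ∀ n, Measurable (Y n))
    (hindep : iIndepFun Y μ)
    (hdist : ∀ n, μ {ω | Y n ω = 1} = 1 / 2 ∧ μ {ω | Y n ω = -1} = 1 / 2)
    (x₀ : ℤ) (hx₀ : 1 ≤ x₀)
    (X : ℕ → Ω → ℤ) (hX0 : ∀ ω, X 0 ω = x₀)
    (hXrec : ∀ n ω, X (n + 1) ω =
      if 1 ≤ X n ω then X n ω + Y (n + 1) ω * Int.sqrt (X n ω) else X n ω) :
    μ {ω | ∃ n : ℕ, X n ω ≤ 0} = 1 ∧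
      ∃ C > (0 : ℝ), ∃ K : ℕ, ∀ k : ℕ, K ≤ k →
        (μ {ω | ∀ n < k, 0 < X n ω}).toReal ≤ C * (k : ℝ) ^ (-(1 / 6) : ℝ) := by
  classical
  have hx₀R : (1 : ℝ) ≤ (x₀ : ℝ) := by exact_mod_cast hx₀
  -- measurability of X
  have hXmeas : ∀ n, Measurable (X n) := by
    intro n
    induction n with
    | zero =>
        have : X 0 = fun _ => x₀ := funext hX0
        rw [this]; exact measurable_const
    | succ n ih =>
        have : X (n + 1) = fun ω =>
            (fun p : ℤ × ℤ => if 1 ≤ p.1 then p.1 + p.2 * Int.sqrt p.1 else p.1)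
              (X n ω, Y (n + 1) ω) := funext fun ω => hXrec n ω
        rw [this]
        exact (measurable_of_countable (fun p : ℤ × ℤ =>
          if 1 ≤ p.1 then p.1 + p.2 * Int.sqrt p.1 else p.1)).comp
          (ih.prodMk (hmeas (n + 1)))
  constructor
  · -- almost sure termination
    set S : Set Ω := ⋂ n, {ω | 0 < X n ω} with hSdef
    have hSmeas : MeasurableSet S :=
      MeasurableSet.iInter fun n =>
        (hXmeas n) (show MeasurableSet {z : ℤ | 0 < z} from trivial)
    set D : ℝ := ((x₀ : ℝ) + 2) ^ 2 + (x₀ : ℝ) with hDdef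
    have hSle : ∀ m : ℕ, 1 ≤ m → (μ S).toReal ≤ D / m := by
      intro m hm
      have hm1 : (1 : ℝ) ≤ (m : ℝ) := by exact_mod_cast hm
      have hkey := sqrt_walk_key μ Y hmeas hindep hdist x₀ hx₀ X hX0 hXrec
        (m : ℤ) (by exact_mod_cast hm) (m ^ 3) (Nat.one_le_iff_ne_zero.mpr (by positivity))
      have hsub : S ⊆ {ω | ∀ n < m ^ 3, 0 < X n ω} := by
        intro ω hω n _
        exact Set.mem_iInter.mp hω n
      have h1 : (μ S).toReal ≤ (μ {ω | ∀ n < m ^ 3, 0 < X n ω}).toReal :=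
        ENNReal.toReal_mono (measure_ne_top μ _) (measure_mono hsub)
      refine le_trans (le_trans h1 hkey) ?_
      have hc1 : ((m : ℤ) : ℝ) = (m : ℝ) := by push_cast; ring
      rw [hc1]
      have hm3 : ((m ^ 3 : ℕ) : ℝ) = (m : ℝ) ^ 3 := by push_cast; ring
      rw [hm3]
      have hmpos : (0 : ℝ) < (m : ℝ) := by linarith
      have hb1 : ((x₀ : ℝ) + 2 * (m : ℝ)) ^ 2 / (m : ℝ) ^ 3 ≤
          ((x₀ : ℝ) + 2) ^ 2 / (m : ℝ) := by
        rw [div_le_div_iff₀ (by positivity) hmpos]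
        have h : (x₀ : ℝ) + 2 * m ≤ ((x₀ : ℝ) + 2) * m := by nlinarith
        have hsq : ((x₀ : ℝ) + 2 * m) ^ 2 ≤ (((x₀ : ℝ) + 2) * m) ^ 2 := by
          have hnn : (0 : ℝ) ≤ (x₀ : ℝ) + 2 * m := by linarith
          nlinarith
        nlinarith [mul_le_mul_of_nonneg_right hsq (le_of_lt hmpos)]
      have hb2 : (x₀ : ℝ) / (m : ℝ) ≤ (x₀ : ℝ) / (m : ℝ) := le_refl _
      rw [hDdef, add_div]
      exact add_le_add hb1 hb2
    have hS0 : (μ S).toReal = 0 := by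
      have hle0 : (μ S).toReal ≤ 0 := by
        have ht := tendsto_const_div_atTop_nhds_zero_nat D
        refine ge_of_tendsto ht ?_
        filter_upwards [Filter.eventually_ge_atTop 1] with m hm
        exact hSle m hm
      exact le_antisymm hle0 ENNReal.toReal_nonneg
    have hSzero : μ S = 0 := by
      have := (ENNReal.toReal_eq_zero_iff _).mp hS0
      rcases this with h | h
      · exact h
      · exact absurd h (measure_ne_top μ _)
    have hcompl : {ω | ∃ n : ℕ, X n ω ≤ 0} = Sᶜ := by
      ext ω
      simp only [Set.mem_setOf_eq, Set.mem_compl_iff, hSdef, Set.mem_iInter, not_forall,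
        not_lt]
    rw [hcompl, measure_compl hSmeas (measure_ne_top μ _), hSzero, measure_univ, tsub_zero]
  · -- tail bound
    refine ⟨((x₀ : ℝ) + 2) ^ 2 + 2 * (x₀ : ℝ), by positivity, 64, fun k hk => ?_⟩
    have hk1 : 1 ≤ k := le_trans (by norm_num) hk
    have hkR : (64 : ℝ) ≤ (k : ℝ) := by exact_mod_cast hk
    have hkR1 : (1 : ℝ) ≤ (k : ℝ) := by linarith
    have hkpos : (0 : ℝ) < (k : ℝ) := by linarith
    set jR : ℝ := (k : ℝ) ^ ((1 : ℝ) / 6) with hjRdef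
    have hjR0 : (0 : ℝ) < jR := Real.rpow_pos_of_pos hkpos _
    have h64 : ((64 : ℝ)) ^ ((1 : ℝ) / 6) = 2 := by
      have h2 : (64 : ℝ) = 2 ^ (6 : ℕ) := by norm_num
      rw [h2, ← Real.rpow_natCast 2 6, ← Real.rpow_mul (by norm_num)]
      norm_num
    have hjR2 : (2 : ℝ) ≤ jR := by
      rw [← h64, hjRdef]
      exact Real.rpow_le_rpow (by norm_num) hkR (by norm_num)
    set j : ℕ := ⌊jR⌋₊ with hjdef
    have hj1 : 1 ≤ j := Nat.le_floor (by push_cast; linarith)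
    have hjle : (j : ℝ) ≤ jR := Nat.floor_le (le_of_lt hjR0)
    have hjge : jR ≤ 2 * j := by
      have h1 : jR < j + 1 := Nat.lt_floor_add_one jR
      have h2 : (1 : ℝ) ≤ (j : ℝ) := by exact_mod_cast hj1
      linarith
    have hjpos : (0 : ℝ) < (j : ℝ) := by
      have : (1 : ℝ) ≤ (j : ℝ) := by exact_mod_cast hj1
      linarith
    have hkey := sqrt_walk_key μ Y hmeas hindep hdist x₀ hx₀ X hX0 hXrec
      (j : ℤ) (by exact_mod_cast hj1) k hk1
    refine le_trans hkey ?_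
    have hc1 : (((j : ℤ) : ℝ)) = (j : ℝ) := by push_cast; ring
    rw [hc1]
    set r : ℝ := (k : ℝ) ^ (-(1 / 6) : ℝ) with hrdef
    have hrinv : r = jR⁻¹ := by
      rw [hrdef, hjRdef, ← Real.rpow_neg (le_of_lt hkpos)]
    have hrpos : (0 : ℝ) < r := by rw [hrinv]; positivity
    -- part A
    have hA : ((x₀ : ℝ) + 2 * (j : ℝ)) ^ 2 / (k : ℝ) ≤ ((x₀ : ℝ) + 2) ^ 2 * r := by
      have hjj : (1 : ℝ) ≤ (j : ℝ) := by exact_mod_cast hj1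
      have ha1 : ((x₀ : ℝ) + 2 * (j : ℝ)) ^ 2 ≤ ((x₀ : ℝ) + 2) ^ 2 * (j : ℝ) ^ 2 := by
        have h : (x₀ : ℝ) + 2 * j ≤ ((x₀ : ℝ) + 2) * j := by nlinarith
        nlinarith
      have ha2 : (j : ℝ) ^ 2 ≤ (k : ℝ) ^ ((1 : ℝ) / 3) := by
        have : (j : ℝ) ^ 2 ≤ jR ^ 2 := by nlinarith
        refine le_trans this ?_
        rw [hjRdef, ← Real.rpow_natCast ((k : ℝ) ^ ((1 : ℝ) / 6)) 2,
          ← Real.rpow_mul (le_of_lt hkpos)]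
        norm_num
      have ha3 : (k : ℝ) ^ ((1 : ℝ) / 3) / (k : ℝ) = (k : ℝ) ^ (-(2 / 3) : ℝ) := by
        rw [show ((1 : ℝ) / 3) = (-(2 / 3) : ℝ) + 1 by norm_num, Real.rpow_add hkpos,
          Real.rpow_one, mul_div_cancel_right₀ _ (ne_of_gt hkpos)]
      have ha4 : (k : ℝ) ^ (-(2 / 3) : ℝ) ≤ r := by
        rw [hrdef]
        exact Real.rpow_le_rpow_of_exponent_le hkR1 (by norm_num)
      calc ((x₀ : ℝ) + 2 * (j : ℝ)) ^ 2 / (k : ℝ)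
          ≤ ((x₀ : ℝ) + 2) ^ 2 * (j : ℝ) ^ 2 / (k : ℝ) := by
            gcongr
        _ ≤ ((x₀ : ℝ) + 2) ^ 2 * ((k : ℝ) ^ ((1 : ℝ) / 3) / (k : ℝ)) := by
            rw [mul_div_assoc]
            gcongr
        _ = ((x₀ : ℝ) + 2) ^ 2 * (k : ℝ) ^ (-(2 / 3) : ℝ) := by rw [ha3]
        _ ≤ ((x₀ : ℝ) + 2) ^ 2 * r := mul_le_mul_of_nonneg_left ha4 (by positivity)
    -- part B
    have hB : (x₀ : ℝ) / (j : ℝ) ≤ 2 * (x₀ : ℝ) * r := by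
      have h1 : (x₀ : ℝ) / (j : ℝ) ≤ 2 * (x₀ : ℝ) / jR := by
        rw [div_le_div_iff₀ hjpos hjR0]
        nlinarith
      rw [hrinv]
      calc (x₀ : ℝ) / (j : ℝ) ≤ 2 * (x₀ : ℝ) / jR := h1
        _ = 2 * (x₀ : ℝ) * jR⁻¹ := by rw [div_eq_mul_inv]
    calc ((x₀ : ℝ) + 2 * (j : ℝ)) ^ 2 / (k : ℝ) + (x₀ : ℝ) / (j : ℝ)
        ≤ ((x₀ : ℝ) + 2) ^ 2 * r + 2 * (x₀ : ℝ) * r := add_le_add hA hB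
      _ = (((x₀ : ℝ) + 2) ^ 2 + 2 * (x₀ : ℝ)) * r := by ring
end
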